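/- arXiv:math/0509022 — 5 statements merged into one kernel-verified Lean document; each statement's English description precedes it below -/
import Mathlib

section
/- Let G be a graph with minimum degree δ and no bad sets of size ≤ m. Suppose every set S of size 2 ≤ |S| ≤ m with |∂S| = δ|S| contains a nonempty subset A' of vertices, each of degree δ in G and with no neighbor in S. Then every set S of size at most m with |∂S| = δ|S| is an independent set all of whose vertices have degree δ in G. -/
open MeasureTheory Filter Finset
open scoped ENNReal Classical

noncomputable section

variable {V : Type*}

/-- The edge boundary of a vertex set `S`: edges with exactly one endpoint in `S`. -/
def edgeBoundary [Fintype V] [DecidableEq V] (G : SimpleGraph V) (S : Finset V) :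
    Finset (Sym2 V) :=
  G.edgeFinset.filter fun e => ∃ u v, e = s(u, v) ∧ u ∈ S ∧ v ∉ S

/-- The isoperimetric constant `i(G)`. -/
def isoConst [Fintype V] [DecidableEq V] (G : SimpleGraph V) : ℝ :=
  sInf { x : ℝ | ∃ S : Finset V, S.Nonempty ∧ 2 * S.card ≤ Fintype.card V ∧
      x = ((edgeBoundary G S).card : ℝ) / (S.card : ℝ) }

/-- The minimum degree of a graph (0 for the empty vertex set). -/
def minDeg [Fintype V] (G : SimpleGraph V) : ℕ :=
  sInf {k : ℕ | ∃ v : V, G.degree v = k}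

/-- The edges of `G` with both endpoints in `S` (edges of the induced subgraph). -/
def inducedEdges [Fintype V] [DecidableEq V] (G : SimpleGraph V) (S : Finset V) :
    Finset (Sym2 V) :=
  G.edgeFinset.filter fun e => ∀ v ∈ e, v ∈ S

/-- The simple graph on `Fin n` determined by an edge-indicator function. -/
def graphOf {n : ℕ} (ω : Sym2 (Fin n) → Bool) : SimpleGraph (Fin n) where
  Adj u v := u ≠ v ∧ ω s(u, v) = true
  symm := ⟨fun u v h => ⟨h.1.symm, by rw [Sym2.eq_swap]; exact h.2⟩⟩
  loopless := ⟨fun v h => h.1 rfl⟩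

/-- The Erdős–Rényi measure: each potential edge present independently with
probability `p` (truncated to `[0,1]`). -/
def graphMeasure (n : ℕ) (p : ℝ) : Measure (Sym2 (Fin n) → Bool) :=
  Measure.pi fun _ => (PMF.bernoulli (min (Real.toNNReal p) 1) (min_le_right _ _)).toMeasure

/-- `Pr[B(m,p) ≤ D]` for a binomial random variable. -/
def binomCDF (m : ℕ) (p : ℝ) (D : ℕ) : ℝ :=
  ∑ k ∈ Finset.range (D + 1), (m.choose k : ℝ) * p ^ k * (1 - p) ^ (m - k)

lemma mem_edgeBoundary_iff' [Fintype V] [DecidableEq V] (G : SimpleGraph V) (S : Finset V)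
    (e : Sym2 V) :
    e ∈ edgeBoundary G S ↔ e ∈ G.edgeFinset ∧ ∃ u v, e = s(u, v) ∧ u ∈ S ∧ v ∉ S := by
  simp [edgeBoundary]

lemma edgeBoundary_singleton [Fintype V] [DecidableEq V] (G : SimpleGraph V) (v : V) :
    edgeBoundary G {v} = G.incidenceFinset v := by
  ext e
  rw [mem_edgeBoundary_iff', SimpleGraph.mem_incidenceFinset, SimpleGraph.incidenceSet]
  constructor
  · rintro ⟨he, u, w, rfl, hu, hw⟩
    simp only [Finset.mem_singleton] at hu
    exact ⟨by simpa [SimpleGraph.mem_edgeFinset] using he, by simp [hu]⟩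
  · rintro ⟨he, hv⟩
    induction e with
    | h a b =>
      have hadj : G.Adj a b := he
      rw [Sym2.mem_iff] at hv
      refine ⟨by simpa [SimpleGraph.mem_edgeFinset] using he, ?_⟩
      rcases hv with rfl | rfl
      · exact ⟨v, b, rfl, by simp, by simp [hadj.ne']⟩
      · exact ⟨v, a, by rw [Sym2.eq_swap], by simp, by simp [hadj.ne]⟩

lemma incidence_biUnion_card [Fintype V] [DecidableEq V] (G : SimpleGraph V)
    (S A' : Finset V) (hsub : A' ⊆ S)
    (hA : ∀ v ∈ A', G.degree v = minDeg G ∧ ∀ u ∈ S, ¬ G.Adj v u) :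
    (A'.biUnion (fun a => G.incidenceFinset a)).card = minDeg G * A'.card := by
  rw [Finset.card_biUnion]
  · rw [Finset.sum_congr rfl fun a ha => by
      rw [SimpleGraph.card_incidenceFinset_eq_degree, (hA a ha).1]]
    simp [mul_comm]
  · intro a ha b hb hab
    rw [Function.onFun, Finset.disjoint_left]
    intro e hea heb
    rw [SimpleGraph.mem_incidenceFinset] at hea heb
    exact (hA a ha).2 b (hsub hb) (G.adj_of_mem_incidenceSet hab hea heb)

/-- if `G` has no bad sets of size `≤ m`, and every `S` with
`2 ≤ |S| ≤ m` and `|∂S| = δ|S|` contains a nonempty `A'` of vertices of degree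
`δ` with no neighbor in `S`, then every `S` of size `≤ m` with `|∂S| = δ|S|` is
an independent set all of whose vertices have degree `δ`. -/
theorem tight_sets_independent [Fintype V] [DecidableEq V] (G : SimpleGraph V)
    (m : ℕ)
    (hnobad : ∀ T : Finset V, T.Nonempty → T.card ≤ m →
      minDeg G * T.card ≤ (edgeBoundary G T).card)
    (hA' : ∀ S : Finset V, 2 ≤ S.card → S.card ≤ m →
      (edgeBoundary G S).card = minDeg G * S.card →
      ∃ A' : Finset V, A' ⊆ S ∧ A'.Nonempty ∧
        ∀ v ∈ A', G.degree v = minDeg G ∧ ∀ u ∈ S, ¬ G.Adj v u) :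
    ∀ S : Finset V, S.Nonempty → S.card ≤ m →
      (edgeBoundary G S).card = minDeg G * S.card →
      (∀ v ∈ S, G.degree v = minDeg G) ∧ (∀ u ∈ S, ∀ v ∈ S, ¬ G.Adj u v) := by
  intro S
  induction S using Finset.strongInduction with
  | _ S ih =>
    intro hne hcard hbd
    rcases Nat.lt_or_ge S.card 2 with h1 | h2
    · -- base case: |S| = 1
      have hc1 : S.card = 1 := le_antisymm (by omega) (Finset.card_pos.mpr hne)
      obtain ⟨v, rfl⟩ := Finset.card_eq_one.mp hc1
      rw [edgeBoundary_singleton] at hbd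
      rw [hc1, mul_one] at hbd
      rw [SimpleGraph.card_incidenceFinset_eq_degree] at hbd
      refine ⟨fun w hw => ?_, fun u hu w hw => ?_⟩
      · simp only [Finset.mem_singleton] at hw; subst hw; exact hbd
      · simp only [Finset.mem_singleton] at hu hw; subst hu; subst hw
        exact G.loopless.irrefl _
    · -- inductive step
      obtain ⟨A', hsub, hA'ne, hA⟩ := hA' S h2 hcard hbd
      set S' : Finset V := S \ A' with hS'
      -- key claims about boundaries
      have hBsub : edgeBoundary G S' ⊆ edgeBoundary G S := by
        intro e he
        rw [mem_edgeBoundary_iff'] at he ⊢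
        obtain ⟨he1, u, w, rfl, hu, hw⟩ := he
        refine ⟨he1, u, w, rfl, Finset.mem_sdiff.mp hu |>.1, fun hwS => ?_⟩
        have hwA : w ∈ A' := by
          by_contra hwA
          exact hw (Finset.mem_sdiff.mpr ⟨hwS, hwA⟩)
        have hadj : G.Adj u w := by
          rwa [SimpleGraph.mem_edgeFinset, SimpleGraph.mem_edgeSet] at he1
        exact (hA w hwA).2 u (Finset.mem_sdiff.mp hu).1 hadj.symm
      have hFsub : A'.biUnion (fun a => G.incidenceFinset a) ⊆ edgeBoundary G S := by
        intro e he
        rw [Finset.mem_biUnion] at he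
        obtain ⟨a, ha, hea⟩ := he
        rw [SimpleGraph.mem_incidenceFinset] at hea
        obtain ⟨heE, haE⟩ := hea
        rw [mem_edgeBoundary_iff']
        induction e with
        | h x y =>
          have hadj : G.Adj x y := heE
          rw [Sym2.mem_iff] at haE
          refine ⟨by simpa [SimpleGraph.mem_edgeFinset] using heE, ?_⟩
          rcases haE with rfl | rfl
          · exact ⟨a, y, rfl, hsub ha, fun hy => (hA a ha).2 y hy hadj⟩
          · exact ⟨a, x, by rw [Sym2.eq_swap], hsub ha,
              fun hx => (hA a ha).2 x hx hadj.symm⟩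
      have hdisj : Disjoint (edgeBoundary G S') (A'.biUnion (fun a => G.incidenceFinset a)) := by
        rw [Finset.disjoint_left]
        intro e heB heF
        rw [mem_edgeBoundary_iff'] at heB
        obtain ⟨he1, u, w, rfl, hu, hw⟩ := heB
        rw [Finset.mem_biUnion] at heF
        obtain ⟨a, ha, hea⟩ := heF
        rw [SimpleGraph.mem_incidenceFinset] at hea
        have haM : a ∈ s(u, w) := hea.2
        rw [Sym2.mem_iff] at haM
        rcases haM with rfl | rfl
        · exact (Finset.mem_sdiff.mp hu).2 ha
        · -- a = w: vertices of A' have no neighbor in S, but u ∈ S' ⊆ S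
          have hadj : G.Adj u a := by
            rwa [SimpleGraph.mem_edgeFinset, SimpleGraph.mem_edgeSet] at he1
          exact (hA a ha).2 u (Finset.mem_sdiff.mp hu).1 hadj.symm
      -- conclude for vertices in A' directly; rest via induction
      rcases Finset.eq_empty_or_nonempty S' with hS'e | hS'ne
      · have hSA : S ⊆ A' := Finset.sdiff_eq_empty_iff_subset.mp hS'e
        refine ⟨fun v hv => (hA v (hSA hv)).1, fun u hu v hv => (hA u (hSA hu)).2 v hv⟩
      · have hcardF : (A'.biUnion (fun a => G.incidenceFinset a)).card = minDeg G * A'.card :=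
          incidence_biUnion_card G S A' hsub hA
        have hle : (edgeBoundary G S').card + minDeg G * A'.card ≤
            (edgeBoundary G S).card := by
          rw [← hcardF, ← Finset.card_union_of_disjoint hdisj]
          exact Finset.card_le_card (Finset.union_subset hBsub hFsub)
        have hcards : S'.card + A'.card = S.card := Finset.card_sdiff_add_card_eq_card hsub
        have hge : minDeg G * S'.card ≤ (edgeBoundary G S').card :=
          hnobad S' hS'ne (le_trans (Finset.card_le_card Finset.sdiff_subset) hcard)
        have hbd' : (edgeBoundary G S').card = minDeg G * S'.card := by
          have hmul : minDeg G * S.card = minDeg G * S'.card + minDeg G * A'.card := by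
            rw [← hcards, Nat.mul_add]
          omega
        have hss : S' ⊂ S := Finset.sdiff_ssubset hsub hA'ne
        obtain ⟨hdeg', hindep'⟩ := ih S' hss hS'ne
          (le_trans (Finset.card_le_card Finset.sdiff_subset) hcard) hbd'
        constructor
        · intro v hv
          by_cases hvA : v ∈ A'
          · exact (hA v hvA).1
          · exact hdeg' v (Finset.mem_sdiff.mpr ⟨hv, hvA⟩)
        · intro u hu v hv
          by_cases huA : u ∈ A'
          · exact (hA u huA).2 v hv
          · by_cases hvA : v ∈ A'
            · exact fun h => (hA v hvA).2 u hu h.symm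
            · exact hindep' u (Finset.mem_sdiff.mpr ⟨hu, huA⟩)
                v (Finset.mem_sdiff.mpr ⟨hv, hvA⟩)

end
end

section
/- Fix 0 < ε < 1/2. For C = C(ε) sufficiently large and p = C log n / n, the random graph G(n,p) satisfies with probability tending to 1: for every set S of ⌊n/2⌋ vertices, |∂S|/|S| < (1/2 + ε)·δ(G), and consequently i(G) ≤ (1/2 + ε)·δ(G). -/
open MeasureTheory Filter Finset
open scoped ENNReal Classical

noncomputable section

variable {V : Type*}

/-! ### Auxiliary material for the proof -/

namespace ER

variable {n : ℕ} {p : ℝ}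

abbrev q (p : ℝ) : ℝ≥0∞ := ((min (Real.toNNReal p) 1 : NNReal) : ℝ≥0∞)

lemma meas_set (s : Set (Sym2 (Fin n) → Bool)) : MeasurableSet s := s.toFinite.measurableSet

instance : IsProbabilityMeasure (graphMeasure n p) := by
  unfold graphMeasure; infer_instance

/-- number of present edges among a fixed set of potential edges -/
def cnt (T : Finset (Sym2 (Fin n))) (ω : Sym2 (Fin n) → Bool) : ℕ :=
  (T.filter fun e => ω e = true).card

lemma lintegral_prod_coord (f : Sym2 (Fin n) → Bool → ℝ≥0∞) :
    ∫⁻ ω, ∏ i, f i (ω i) ∂(graphMeasure n p)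
      = ∏ i : Sym2 (Fin n), (f i true * q p + f i false * (1 - q p)) := by
  rw [lintegral_fintype]
  have hsingle : ∀ ω : Sym2 (Fin n) → Bool, graphMeasure n p {ω}
      = ∏ i : Sym2 (Fin n), ((PMF.bernoulli (min (Real.toNNReal p) 1) (min_le_right _ _)) (ω i)) := by
    intro ω
    rw [← Set.univ_pi_singleton ω]
    rw [graphMeasure, Measure.pi_pi]
    refine Finset.prod_congr rfl fun i _ => ?_
    exact PMF.toMeasure_apply_singleton _ _ (measurableSet_singleton _)
  calc ∑ ω : Sym2 (Fin n) → Bool, (∏ i, f i (ω i)) * graphMeasure n p {ω}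
      = ∑ ω : Sym2 (Fin n) → Bool,
          ∏ i, (f i (ω i) * (PMF.bernoulli (min (Real.toNNReal p) 1) (min_le_right _ _)) (ω i)) := by
        refine Finset.sum_congr rfl fun ω _ => ?_
        rw [hsingle ω, ← Finset.prod_mul_distrib]
    _ = ∏ i : Sym2 (Fin n), ∑ b : Bool, f i b * (PMF.bernoulli (min (Real.toNNReal p) 1) (min_le_right _ _)) b := by
        rw [Fintype.prod_sum]
    _ = _ := by
        refine Finset.prod_congr rfl fun i _ => ?_
        simp [PMF.bernoulli_apply, Fintype.sum_bool]

lemma pow_cnt_eq_prod (T : Finset (Sym2 (Fin n))) (r : ℝ≥0∞) (ω : Sym2 (Fin n) → Bool) :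
    r ^ cnt T ω = ∏ i : Sym2 (Fin n), (if i ∈ T ∧ ω i = true then r else 1) := by
  classical
  have key := Finset.prod_filter_mul_prod_filter_not Finset.univ
    (fun i => i ∈ T ∧ ω i = true) (fun i => if i ∈ T ∧ ω i = true then r else (1 : ℝ≥0∞))
  have h1 : ∏ i ∈ Finset.univ.filter (fun i => i ∈ T ∧ ω i = true),
      (if i ∈ T ∧ ω i = true then r else (1:ℝ≥0∞)) = r ^ cnt T ω := by
    rw [Finset.prod_congr rfl (fun i hi => if_pos (Finset.mem_filter.mp hi).2),
      Finset.prod_const]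
    congr 1
    unfold cnt
    congr 1
    ext i
    simp [and_comm]
  have h2 : ∏ i ∈ Finset.univ.filter (fun i => ¬(i ∈ T ∧ ω i = true)),
      (if i ∈ T ∧ ω i = true then r else (1:ℝ≥0∞)) = 1 :=
    Finset.prod_eq_one fun i hi => if_neg (Finset.mem_filter.mp hi).2
  rw [← key, h1, h2, mul_one]

lemma lintegral_pow_cnt (T : Finset (Sym2 (Fin n))) (r : ℝ≥0∞) :
    ∫⁻ ω, r ^ cnt T ω ∂(graphMeasure n p) = (r * q p + (1 - q p)) ^ T.card := by
  classical
  calc ∫⁻ ω, r ^ cnt T ω ∂(graphMeasure n p)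
      = ∫⁻ ω, ∏ i : Sym2 (Fin n), (if i ∈ T ∧ ω i = true then r else 1) ∂(graphMeasure n p) := by
        simp_rw [pow_cnt_eq_prod]
    _ = ∏ i : Sym2 (Fin n), ((if i ∈ T ∧ True then r else 1) * q p
          + (if i ∈ T ∧ False then r else 1) * (1 - q p)) := by
        rw [lintegral_prod_coord (fun i b => if i ∈ T ∧ b = true then r else 1)]
        simp
    _ = ∏ i : Sym2 (Fin n), (if i ∈ T then r * q p + (1 - q p) else 1) := by
        refine Finset.prod_congr rfl fun i _ => ?_
        by_cases hi : i ∈ T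
        · simp [hi]
        · have : q p + (1 - q p) = 1 := by
            rw [add_comm]; exact tsub_add_cancel_of_le (ENNReal.coe_le_one_iff.mpr (min_le_right _ _))
          simp [hi, this]
    _ = (r * q p + (1 - q p)) ^ T.card := by
        rw [Finset.prod_ite_mem, Finset.univ_inter, Finset.prod_const]

lemma measurable_all {β : Type*} [MeasurableSpace β] (f : (Sym2 (Fin n) → Bool) → β) :
    Measurable f := measurable_of_countable f

lemma chernoff_upper (T : Finset (Sym2 (Fin n))) (r : ℝ≥0∞) (hr : 1 ≤ r) (k : ℕ) :
    graphMeasure n p {ω | k ≤ cnt T ω} * r ^ k ≤ (r * q p + (1 - q p)) ^ T.card := by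
  have hsub : {ω : Sym2 (Fin n) → Bool | k ≤ cnt T ω} ⊆ {ω | r ^ k ≤ r ^ cnt T ω} :=
    fun ω hω => pow_le_pow_right₀ hr hω
  calc graphMeasure n p {ω | k ≤ cnt T ω} * r ^ k
      ≤ graphMeasure n p {ω | r ^ k ≤ r ^ cnt T ω} * r ^ k :=
        mul_le_mul_left (measure_mono hsub) _
    _ = r ^ k * graphMeasure n p {ω | r ^ k ≤ r ^ cnt T ω} := mul_comm _ _
    _ ≤ ∫⁻ ω, r ^ cnt T ω ∂(graphMeasure n p) :=
        mul_meas_ge_le_lintegral (measurable_all _) _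
    _ = _ := lintegral_pow_cnt T r

lemma chernoff_lower (T : Finset (Sym2 (Fin n))) (r : ℝ≥0∞) (hr : r ≤ 1) (k : ℕ) :
    graphMeasure n p {ω | cnt T ω ≤ k} * r ^ k ≤ (r * q p + (1 - q p)) ^ T.card := by
  have hsub : {ω : Sym2 (Fin n) → Bool | cnt T ω ≤ k} ⊆ {ω | r ^ k ≤ r ^ cnt T ω} :=
    fun ω hω => pow_le_pow_of_le_one (zero_le) hr hω
  calc graphMeasure n p {ω | cnt T ω ≤ k} * r ^ k
      ≤ graphMeasure n p {ω | r ^ k ≤ r ^ cnt T ω} * r ^ k :=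
        mul_le_mul_left (measure_mono hsub) _
    _ = r ^ k * graphMeasure n p {ω | r ^ k ≤ r ^ cnt T ω} := mul_comm _ _
    _ ≤ ∫⁻ ω, r ^ cnt T ω ∂(graphMeasure n p) :=
        mul_meas_ge_le_lintegral (measurable_all _) _
    _ = _ := lintegral_pow_cnt T r

lemma q_eq (hp0 : 0 ≤ p) (hp1 : p ≤ 1) : q p = ENNReal.ofReal p := by
  unfold q; rw [min_eq_left (Real.toNNReal_le_one.mpr hp1)]; rfl

lemma rhs_eq (hp0 : 0 ≤ p) (hp1 : p ≤ 1) (R : ℝ) (hR0 : 0 ≤ R) (M : ℕ) :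
    (ENNReal.ofReal R * q p + (1 - q p)) ^ M = ENNReal.ofReal ((R * p + (1 - p)) ^ M) := by
  rw [q_eq hp0 hp1, ← ENNReal.ofReal_mul hR0, ← ENNReal.ofReal_one, ← ENNReal.ofReal_sub _ hp0,
    ← ENNReal.ofReal_add (by positivity) (by linarith), ENNReal.ofReal_pow (by nlinarith)]

lemma conv (μE : ℝ≥0∞) (R : ℝ) (hR0 : 0 < R) (k : ℕ) (X : ℝ)
    (h : μE * (ENNReal.ofReal R) ^ k ≤ ENNReal.ofReal X) :
    μE ≤ ENNReal.ofReal (X / R ^ k) := by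
  rw [ENNReal.ofReal_div_of_pos (by positivity), ENNReal.ofReal_pow hR0.le]
  rw [ENNReal.le_div_iff_mul_le (Or.inl (by positivity)) (Or.inl (by
    exact ENNReal.pow_ne_top ENNReal.ofReal_ne_top))]
  exact h

lemma chernoff_lower_real (hp0 : 0 ≤ p) (hp1 : p ≤ 1) (T : Finset (Sym2 (Fin n)))
    (R : ℝ) (hR0 : 0 < R) (hR1 : R ≤ 1) (k : ℕ) :
    graphMeasure n p {ω | cnt T ω ≤ k} ≤
      ENNReal.ofReal ((R * p + (1 - p)) ^ T.card / R ^ k) := by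
  refine conv _ R hR0 k _ ?_
  rw [← rhs_eq hp0 hp1 R hR0.le]
  exact chernoff_lower T _ (ENNReal.ofReal_le_one.mpr hR1) k

lemma chernoff_upper_real (hp0 : 0 ≤ p) (hp1 : p ≤ 1) (T : Finset (Sym2 (Fin n)))
    (R : ℝ) (hR1 : 1 ≤ R) (k : ℕ) :
    graphMeasure n p {ω | k ≤ cnt T ω} ≤
      ENNReal.ofReal ((R * p + (1 - p)) ^ T.card / R ^ k) := by
  refine conv _ R (by linarith) k _ ?_
  rw [← rhs_eq hp0 hp1 R (by linarith)]
  exact chernoff_upper T _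
    (by rwa [← ENNReal.ofReal_one, ENNReal.ofReal_le_ofReal_iff (by linarith)]) k

/-! ### Real-valued tail estimates -/

lemma est_lower {p θ : ℝ} (hp0 : 0 ≤ p) (hp1 : p ≤ 1) (hθ0 : 0 < θ) (hθ1 : θ < 1) (M : ℕ) :
    ((1-θ) * p + (1 - p)) ^ M / (1-θ) ^ (⌊(1-θ) * p * M⌋₊) ≤
      Real.exp (-(p * M) * (θ + (1-θ) * Real.log (1-θ))) := by
  have hb0 : (0:ℝ) < 1 - θ := by linarith
  set a : ℝ := (1-θ) * p * M with ha
  have ha0 : 0 ≤ a := by positivity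
  have hnum : ((1-θ) * p + (1 - p)) ^ M ≤ Real.exp (-(θ*p) * M) := by
    have h1 : (1-θ) * p + (1 - p) = 1 - θ*p := by ring
    have h2 : 1 - θ*p ≤ Real.exp (-(θ*p)) := by
      have := Real.add_one_le_exp (-(θ*p)); linarith
    calc ((1-θ) * p + (1 - p)) ^ M ≤ Real.exp (-(θ*p)) ^ M := by
          rw [h1]; exact pow_le_pow_left₀ (by nlinarith) h2 M
      _ = Real.exp (-(θ*p) * M) := by rw [← Real.exp_nat_mul]; ring_nf
  have hden : (1-θ) ^ (a : ℝ) ≤ (1-θ) ^ (⌊a⌋₊ : ℕ) := by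
    rw [← Real.rpow_natCast (1-θ) ⌊a⌋₊]
    exact Real.rpow_le_rpow_of_exponent_ge hb0 (by linarith) (Nat.floor_le ha0)
  have hdenpos : (0:ℝ) < (1-θ) ^ (a:ℝ) := Real.rpow_pos_of_pos hb0 _
  calc ((1-θ) * p + (1 - p)) ^ M / (1-θ) ^ (⌊a⌋₊)
      ≤ Real.exp (-(θ*p) * M) / (1-θ) ^ (a:ℝ) :=
        div_le_div₀ (Real.exp_nonneg _) hnum hdenpos hden
    _ = Real.exp (-(θ*p)*M) / Real.exp (Real.log (1-θ) * a) := by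
        rw [Real.rpow_def_of_pos hb0]
    _ = Real.exp (-(θ*p)*M - Real.log (1-θ) * a) := by rw [← Real.exp_sub]
    _ = Real.exp (-(p * M) * (θ + (1-θ) * Real.log (1-θ))) := by rw [ha]; ring_nf

lemma est_upper {p θ : ℝ} (hp0 : 0 ≤ p) (hp1 : p ≤ 1) (hθ0 : 0 < θ) (M' M : ℕ) (hMM' : M' ≤ M) :
    ((1+θ) * p + (1 - p)) ^ M' / (1+θ) ^ (⌊(1+θ) * p * M⌋₊ + 1) ≤
      Real.exp (-(p * M) * ((1+θ) * Real.log (1+θ) - θ)) := by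
  have hb1 : (1:ℝ) ≤ 1 + θ := by linarith
  set b : ℝ := (1+θ) * p * M with hb
  have hb0 : 0 ≤ b := by positivity
  have hnum : ((1+θ) * p + (1 - p)) ^ M' ≤ Real.exp (θ*p*M) := by
    have h1 : (1+θ) * p + (1 - p) = 1 + θ*p := by ring
    have h2 : 1 + θ*p ≤ Real.exp (θ*p) := by
      have := Real.add_one_le_exp (θ*p); linarith
    calc ((1+θ) * p + (1 - p)) ^ M' ≤ (1 + θ*p) ^ M := by
          rw [h1]; exact pow_le_pow_right₀ (by nlinarith) hMM'
      _ ≤ Real.exp (θ*p) ^ M := pow_le_pow_left₀ (by positivity) h2 M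
      _ = Real.exp (θ*p*M) := by rw [← Real.exp_nat_mul]; ring_nf
  have hden : (1+θ) ^ (b : ℝ) ≤ (1+θ) ^ ((⌊b⌋₊ + 1 : ℕ) : ℕ) := by
    rw [← Real.rpow_natCast (1+θ) (⌊b⌋₊ + 1)]
    refine Real.rpow_le_rpow_of_exponent_le hb1 ?_
    push_cast
    exact (Nat.lt_floor_add_one b).le
  have hdenpos : (0:ℝ) < (1+θ) ^ (b:ℝ) := Real.rpow_pos_of_pos (by linarith) _
  calc ((1+θ) * p + (1 - p)) ^ M' / (1+θ) ^ (⌊b⌋₊ + 1)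
      ≤ Real.exp (θ*p*M) / (1+θ) ^ (b:ℝ) :=
        div_le_div₀ (Real.exp_nonneg _) hnum hdenpos hden
    _ = Real.exp (θ*p*M) / Real.exp (Real.log (1+θ) * b) := by
        rw [Real.rpow_def_of_pos (by linarith)]
    _ = Real.exp (θ*p*M - Real.log (1+θ) * b) := by rw [← Real.exp_sub]
    _ = Real.exp (-(p * M) * ((1+θ) * Real.log (1+θ) - θ)) := by rw [hb]; ring_nf

lemma g_pos {θ : ℝ} (hθ0 : 0 < θ) (hθ1 : θ < 1) : 0 < θ + (1-θ) * Real.log (1-θ) := by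
  have hb0 : (0:ℝ) < 1 - θ := by linarith
  have h := Real.log_lt_sub_one_of_pos (x := (1-θ)⁻¹) (by positivity)
    (by intro h; rw [inv_eq_one] at h; linarith)
  rw [Real.log_inv] at h
  have h2 : (1-θ)⁻¹ - 1 = θ / (1-θ) := by field_simp; ring
  rw [h2] at h
  have h3 : -Real.log (1-θ) * (1-θ) < θ := by
    have := mul_lt_mul_of_pos_right h hb0
    calc -Real.log (1-θ) * (1-θ) < θ / (1-θ) * (1-θ) := this
      _ = θ := by field_simp
  nlinarith

lemma h_pos {θ : ℝ} (hθ0 : 0 < θ) : 0 < (1+θ) * Real.log (1+θ) - θ := by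
  have hb0 : (0:ℝ) < 1 + θ := by linarith
  have h := Real.log_lt_sub_one_of_pos (x := (1+θ)⁻¹) (by positivity)
    (by intro h; rw [inv_eq_one] at h; linarith)
  rw [Real.log_inv] at h
  have h2 : (1+θ)⁻¹ - 1 = -θ / (1+θ) := by field_simp; ring
  rw [h2] at h
  have h3 : -Real.log (1+θ) * (1+θ) < -θ := by
    have := mul_lt_mul_of_pos_right h hb0
    calc -Real.log (1+θ) * (1+θ) < -θ / (1+θ) * (1+θ) := this
      _ = -θ := by field_simp
  nlinarith

/-! ### Graph-theoretic translations -/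

/-- star at `v` -/
def Tv (n : ℕ) (v : Fin n) : Finset (Sym2 (Fin n)) :=
  (Finset.univ.erase v).image fun u => s(v, u)

lemma Tv_card (v : Fin n) : (Tv n v).card = n - 1 := by
  rw [Tv, Finset.card_image_of_injective _ (fun a b h => by
    simpa using Sym2.congr_right.mp h), Finset.card_erase_of_mem (Finset.mem_univ v),
    Finset.card_univ, Fintype.card_fin]

lemma degree_eq_cnt (ω : Sym2 (Fin n) → Bool) (v : Fin n) :
    (graphOf ω).degree v = cnt (Tv n v) ω := by
  unfold cnt
  rw [← SimpleGraph.card_neighborFinset_eq_degree]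
  apply Finset.card_bij (fun u _ => s(v, u))
  · intro u hu
    rw [SimpleGraph.mem_neighborFinset] at hu
    obtain ⟨hne, hω⟩ := (show v ≠ u ∧ ω s(v, u) = true from hu)
    refine Finset.mem_filter.mpr ⟨Finset.mem_image.mpr ⟨u, ?_, rfl⟩, hω⟩
    exact Finset.mem_erase.mpr ⟨Ne.symm hne, Finset.mem_univ u⟩
  · intro a ha b hb h
    exact Sym2.congr_right.mp h
  · intro e he
    rw [Finset.mem_filter, Tv, Finset.mem_image] at he
    obtain ⟨⟨u, hu, rfl⟩, hω⟩ := he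
    refine ⟨u, ?_, rfl⟩
    rw [SimpleGraph.mem_neighborFinset]
    exact (show v ≠ u ∧ ω s(v, u) = true from ⟨(Finset.mem_erase.mp hu).1.symm, hω⟩)

/-- potential boundary edges -/
def TS (S : Finset (Fin n)) : Finset (Sym2 (Fin n)) :=
  (S ×ˢ Sᶜ).image fun uv => s(uv.1, uv.2)

lemma TS_card_le (S : Finset (Fin n)) : (TS S).card ≤ S.card * (n - S.card) := by
  calc (TS S).card ≤ (S ×ˢ Sᶜ).card := Finset.card_image_le
    _ = S.card * (n - S.card) := by
        rw [Finset.card_product, Finset.card_compl, Fintype.card_fin]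

lemma edgeBoundary_card_le (ω : Sym2 (Fin n) → Bool) (S : Finset (Fin n)) :
    (edgeBoundary (graphOf ω) S).card ≤ cnt (TS S) ω := by
  unfold cnt
  apply Finset.card_le_card
  intro e he
  simp only [edgeBoundary, Finset.mem_filter] at he
  obtain ⟨hedge, u, v, rfl, huS, hvS⟩ := he
  rw [SimpleGraph.mem_edgeFinset, SimpleGraph.mem_edgeSet] at hedge
  refine Finset.mem_filter.mpr ⟨?_, (show u ≠ v ∧ ω s(u, v) = true from hedge).2⟩
  exact Finset.mem_image.mpr ⟨(u, v), Finset.mem_product.mpr ⟨huS, Finset.mem_compl.mpr hvS⟩, rfl⟩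

/-! ### Bad events and their bounds -/

/-- bad degree event -/
def BadD (n : ℕ) (p θ : ℝ) : Set (Sym2 (Fin n) → Bool) :=
  ⋃ v : Fin n, {ω | cnt (Tv n v) ω ≤ ⌊(1-θ) * p * ((n-1 : ℕ) : ℝ)⌋₊}

def NB (n : ℕ) : ℕ := (n/2) * (n - n/2)

/-- bad boundary event -/
def BadB (n : ℕ) (p θ : ℝ) : Set (Sym2 (Fin n) → Bool) :=
  ⋃ S : Finset (Fin n),
    {ω | S.card = n/2 ∧ ⌊(1+θ) * p * ((NB n : ℕ) : ℝ)⌋₊ + 1 ≤ cnt (TS S) ω}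

lemma badD_bound (hp0 : 0 ≤ p) (hp1 : p ≤ 1) {θ : ℝ} (hθ0 : 0 < θ) (hθ1 : θ < 1) :
    graphMeasure n p (BadD n p θ) ≤
      ENNReal.ofReal ((n : ℝ) *
        Real.exp (-(p * ((n-1:ℕ):ℝ)) * (θ + (1-θ) * Real.log (1-θ)))) := by
  set X := Real.exp (-(p * ((n-1:ℕ):ℝ)) * (θ + (1-θ) * Real.log (1-θ))) with hX
  calc graphMeasure n p (BadD n p θ)
      ≤ ∑' v : Fin n, graphMeasure n p {ω | cnt (Tv n v) ω ≤ ⌊(1-θ) * p * ((n-1:ℕ):ℝ)⌋₊} :=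
        measure_iUnion_le _
    _ = ∑ v : Fin n, graphMeasure n p {ω | cnt (Tv n v) ω ≤ ⌊(1-θ) * p * ((n-1:ℕ):ℝ)⌋₊} :=
        tsum_fintype _
    _ ≤ ∑ _v : Fin n, ENNReal.ofReal X := by
        refine Finset.sum_le_sum fun v _ => ?_
        refine le_trans (chernoff_lower_real hp0 hp1 _ (1-θ) (by linarith) (by linarith) _) ?_
        rw [Tv_card]
        exact ENNReal.ofReal_le_ofReal (est_lower hp0 hp1 hθ0 hθ1 (n-1))
    _ = (n : ℝ≥0∞) * ENNReal.ofReal X := by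
        rw [Finset.sum_const, Finset.card_univ, Fintype.card_fin, nsmul_eq_mul]
    _ = ENNReal.ofReal ((n:ℝ) * X) := by
        rw [ENNReal.ofReal_mul (by positivity), ENNReal.ofReal_natCast]

lemma badB_bound (hp0 : 0 ≤ p) (hp1 : p ≤ 1) {θ : ℝ} (hθ0 : 0 < θ) :
    graphMeasure n p (BadB n p θ) ≤
      ENNReal.ofReal ((2:ℝ)^n *
        Real.exp (-(p * ((NB n : ℕ):ℝ)) * ((1+θ) * Real.log (1+θ) - θ))) := by
  set X := Real.exp (-(p * ((NB n:ℕ):ℝ)) * ((1+θ) * Real.log (1+θ) - θ)) with hX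
  calc graphMeasure n p (BadB n p θ)
      ≤ ∑' S : Finset (Fin n), graphMeasure n p
          {ω | S.card = n/2 ∧ ⌊(1+θ) * p * ((NB n:ℕ):ℝ)⌋₊ + 1 ≤ cnt (TS S) ω} :=
        measure_iUnion_le _
    _ = ∑ S : Finset (Fin n), graphMeasure n p
          {ω | S.card = n/2 ∧ ⌊(1+θ) * p * ((NB n:ℕ):ℝ)⌋₊ + 1 ≤ cnt (TS S) ω} :=
        tsum_fintype _
    _ ≤ ∑ _S : Finset (Fin n), ENNReal.ofReal X := by
        refine Finset.sum_le_sum fun S _ => ?_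
        by_cases hS : S.card = n/2
        · refine le_trans (measure_mono (fun ω hω => hω.2)) ?_
          refine le_trans (chernoff_upper_real hp0 hp1 (TS S) (1+θ) (by linarith) _) ?_
          refine ENNReal.ofReal_le_ofReal ?_
          refine est_upper hp0 hp1 hθ0 _ _ ?_
          calc (TS S).card ≤ S.card * (n - S.card) := TS_card_le S
            _ = NB n := by rw [hS, NB]
        · have : {ω : Sym2 (Fin n) → Bool |
              S.card = n/2 ∧ ⌊(1+θ) * p * ((NB n:ℕ):ℝ)⌋₊ + 1 ≤ cnt (TS S) ω} = ∅ := by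
            ext ω; simp [hS]
          rw [this, measure_empty]
          exact zero_le
    _ = ((2:ℝ≥0∞)^n) * ENNReal.ofReal X := by
        rw [Finset.sum_const, Finset.card_univ, Fintype.card_finset, Fintype.card_fin,
          nsmul_eq_mul]
        norm_cast
    _ = ENNReal.ofReal ((2:ℝ)^n * X) := by
        rw [ENNReal.ofReal_mul (by positivity)]
        congr 1
        rw [ENNReal.ofReal_pow (by norm_num)]
        norm_num

/-! ### The good event implies the conclusion -/

lemma good_sub (hn : 2 ≤ n) (hp0 : 0 < p) {θ ε : ℝ} (hθ0 : 0 < θ) (hθ1 : θ < 1) (hε0 : 0 < ε)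
    (hA : (1+θ) * ((n - n/2 : ℕ) : ℝ) ≤ (1/2 + ε) * (1-θ) * ((n-1 : ℕ) : ℝ)) :
    (BadD n p θ ∪ BadB n p θ)ᶜ ⊆
      {ω : Sym2 (Fin n) → Bool | (∀ S : Finset (Fin n), S.card = n / 2 →
            ((edgeBoundary (graphOf ω) S).card : ℝ) <
              (1/2 + ε) * (minDeg (graphOf ω) : ℝ) * (S.card : ℝ)) ∧
          isoConst (graphOf ω) ≤ (1/2 + ε) * (minDeg (graphOf ω) : ℝ)} := by
  intro ω hω
  rw [Set.mem_compl_iff, Set.mem_union, not_or] at hω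
  obtain ⟨h1, h2⟩ := hω
  simp only [BadD, Set.mem_iUnion, Set.mem_setOf_eq, not_exists, not_le] at h1
  simp only [BadB, Set.mem_iUnion, Set.mem_setOf_eq, not_exists, not_and, not_le] at h2
  set δ : ℕ := minDeg (graphOf ω) with hδdef
  have hne : Nonempty (Fin n) := ⟨⟨0, by omega⟩⟩
  obtain ⟨v₀⟩ := hne
  have hmem : δ ∈ {k : ℕ | ∃ v : Fin n, (graphOf ω).degree v = k} :=
    Nat.sInf_mem ⟨(graphOf ω).degree v₀, v₀, rfl⟩
  obtain ⟨v, hv⟩ := hmem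
  have hδgt : ⌊(1-θ) * p * ((n-1 : ℕ) : ℝ)⌋₊ < δ := by
    rw [← hv, degree_eq_cnt]; exact h1 v
  have hδR : (1-θ) * p * ((n-1 : ℕ) : ℝ) < (δ : ℝ) := by
    have := Nat.lt_floor_add_one ((1-θ) * p * ((n-1 : ℕ) : ℝ))
    have hc : ((⌊(1-θ) * p * ((n-1 : ℕ) : ℝ)⌋₊ + 1 : ℕ) : ℝ) ≤ (δ : ℝ) := by
      exact_mod_cast Nat.succ_le_of_lt hδgt
    push_cast at hc
    linarith
  have hm1 : 1 ≤ n / 2 := by omega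
  have hmR : (0:ℝ) < ((n/2 : ℕ) : ℝ) := by exact_mod_cast hm1
  have main : ∀ S : Finset (Fin n), S.card = n / 2 →
      ((edgeBoundary (graphOf ω) S).card : ℝ) < (1/2 + ε) * (δ : ℝ) * (S.card : ℝ) := by
    intro S hS
    have hcnt : cnt (TS S) ω ≤ ⌊(1+θ) * p * ((NB n : ℕ) : ℝ)⌋₊ := by
      have := h2 S hS; omega
    have hb1 : ((edgeBoundary (graphOf ω) S).card : ℝ) ≤ (cnt (TS S) ω : ℝ) := by
      exact_mod_cast edgeBoundary_card_le ω S
    have hb2 : (cnt (TS S) ω : ℝ) ≤ (1+θ) * p * ((NB n : ℕ) : ℝ) := by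
      refine le_trans ?_ (Nat.floor_le (by positivity))
      exact_mod_cast hcnt
    have hNB : ((NB n : ℕ) : ℝ) = ((n/2 : ℕ) : ℝ) * ((n - n/2 : ℕ) : ℝ) := by
      rw [NB]; push_cast; ring
    have hb3 : (1+θ) * p * ((NB n : ℕ) : ℝ) ≤
        (1/2 + ε) * ((1-θ) * p * ((n-1 : ℕ) : ℝ)) * ((n/2 : ℕ) : ℝ) := by
      rw [hNB]
      have := mul_le_mul_of_nonneg_left hA (by positivity : (0:ℝ) ≤ p * ((n/2:ℕ):ℝ))
      nlinarith
    have hb4 : (1/2 + ε) * ((1-θ) * p * ((n-1 : ℕ) : ℝ)) * ((n/2 : ℕ) : ℝ) <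
        (1/2 + ε) * (δ : ℝ) * ((n/2 : ℕ) : ℝ) := by
      have h12 : (0:ℝ) < 1/2 + ε := by linarith
      exact mul_lt_mul_of_pos_right (mul_lt_mul_of_pos_left hδR h12) hmR
    rw [hS]
    calc ((edgeBoundary (graphOf ω) S).card : ℝ) ≤ (cnt (TS S) ω : ℝ) := hb1
      _ ≤ (1+θ) * p * ((NB n : ℕ) : ℝ) := hb2
      _ ≤ (1/2 + ε) * ((1-θ) * p * ((n-1 : ℕ) : ℝ)) * ((n/2 : ℕ) : ℝ) := hb3
      _ < (1/2 + ε) * (δ : ℝ) * ((n/2 : ℕ) : ℝ) := hb4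
  refine ⟨main, ?_⟩
  obtain ⟨T, hTsub, hTcard⟩ := Finset.exists_subset_card_eq
    (show n / 2 ≤ (Finset.univ : Finset (Fin n)).card by
      rw [Finset.card_univ, Fintype.card_fin]; omega)
  have hmain := main T hTcard
  have hTpos : (0:ℝ) < (T.card : ℝ) := by rw [hTcard]; exact hmR
  have hbdd : BddBelow { x : ℝ | ∃ S : Finset (Fin n), S.Nonempty ∧
      2 * S.card ≤ Fintype.card (Fin n) ∧
      x = ((edgeBoundary (graphOf ω) S).card : ℝ) / (S.card : ℝ) } := by
    refine ⟨0, fun x hx => ?_⟩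
    obtain ⟨S, _, _, rfl⟩ := hx
    positivity
  have hmemx : ((edgeBoundary (graphOf ω) T).card : ℝ) / (T.card : ℝ) ∈
      { x : ℝ | ∃ S : Finset (Fin n), S.Nonempty ∧ 2 * S.card ≤ Fintype.card (Fin n) ∧
        x = ((edgeBoundary (graphOf ω) S).card : ℝ) / (S.card : ℝ) } := by
    refine ⟨T, Finset.card_pos.mp (by omega), ?_, rfl⟩
    rw [hTcard, Fintype.card_fin]; omega
  have hlt : ((edgeBoundary (graphOf ω) T).card : ℝ) / (T.card : ℝ) <
      (1/2 + ε) * (δ : ℝ) := by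
    rw [div_lt_iff₀ hTpos]
    exact hmain
  exact le_trans (csInf_le hbdd hmemx) hlt.le

/-! ### The final numeric estimate -/

lemma final_est {C g h : ℝ} (hg : 0 < g) (hh : 0 < h) (hC1 : 1 ≤ C) (hC4 : 4 ≤ C * g)
    (n : ℕ) (hn : 2 ≤ n) (hlog : 8 * (Real.log 2 + 1) / h ≤ Real.log n) :
    (n:ℝ) * Real.exp (-((C * Real.log n / n) * ((n-1:ℕ):ℝ)) * g)
      + 2^n * Real.exp (-((C * Real.log n / n) * ((NB n:ℕ):ℝ)) * h)
      ≤ (n:ℝ)⁻¹ + Real.exp (-(n:ℝ)) := by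
  have hnR : (2:ℝ) ≤ (n:ℝ) := by exact_mod_cast hn
  have hnpos : (0:ℝ) < n := by linarith
  have hlogn : (0:ℝ) ≤ Real.log n := Real.log_nonneg (by linarith)
  have hcast1 : ((n-1:ℕ):ℝ) = (n:ℝ) - 1 := by
    rw [Nat.cast_sub (by omega)]; norm_num
  have hx1 : 2 * Real.log n ≤ (C * Real.log n / n) * ((n-1:ℕ):ℝ) * g := by
    rw [hcast1]
    have h1 : (n:ℝ) ≤ 2 * ((n:ℝ) - 1) := by linarith
    have h3 : 2 * Real.log n * n ≤ 4 * Real.log n * ((n:ℝ)-1) := by nlinarith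
    have h4 : 4 * Real.log n * ((n:ℝ)-1) ≤ C * g * Real.log n * ((n:ℝ)-1) := by
      nlinarith [mul_nonneg hlogn (by linarith : (0:ℝ) ≤ (n:ℝ)-1)]
    rw [div_mul_eq_mul_div, div_mul_eq_mul_div, le_div_iff₀ hnpos]
    nlinarith
  have ht1 : (n:ℝ) * Real.exp (-((C * Real.log n / n) * ((n-1:ℕ):ℝ)) * g) ≤ (n:ℝ)⁻¹ := by
    have he : Real.exp (-((C * Real.log n / n) * ((n-1:ℕ):ℝ) * g)) ≤
        Real.exp (-(2 * Real.log n)) := Real.exp_le_exp.mpr (by linarith)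
    have he2 : Real.exp (-(2 * Real.log n)) = ((n:ℝ)*(n:ℝ))⁻¹ := by
      rw [Real.exp_neg, two_mul, Real.exp_add, Real.exp_log hnpos]
    calc (n:ℝ) * Real.exp (-((C * Real.log n / n) * ((n-1:ℕ):ℝ)) * g)
        ≤ (n:ℝ) * ((n:ℝ)*(n:ℝ))⁻¹ := by
          refine mul_le_mul_of_nonneg_left ?_ hnpos.le
          rw [← he2]
          convert he using 2
          · rfl
          · ring
      _ = (n:ℝ)⁻¹ := by field_simp
  have hNB : (n:ℝ) * (n:ℝ) / 8 ≤ ((NB n:ℕ):ℝ) := by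
    have hA : (n:ℝ) - 1 ≤ 2 * ((n/2:ℕ):ℝ) := by
      have : n ≤ 2 * (n/2) + 1 := by omega
      have := (Nat.cast_le (α := ℝ)).mpr this
      push_cast at this ⊢
      linarith
    have hB : (n:ℝ) ≤ 2 * (((n - n/2):ℕ):ℝ) := by
      have : n ≤ 2 * (n - n/2) := by omega
      have := (Nat.cast_le (α := ℝ)).mpr this
      push_cast at this ⊢
      linarith
    have hcast : ((NB n:ℕ):ℝ) = ((n/2:ℕ):ℝ) * (((n - n/2):ℕ):ℝ) := by
      rw [NB]; push_cast; ring
    rw [hcast]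
    nlinarith [Nat.cast_nonneg (α := ℝ) (n/2), Nat.cast_nonneg (α := ℝ) (n - n/2)]
  have hx2 : (n:ℝ) * Real.log 2 + (n:ℝ) ≤ (C * Real.log n / n) * ((NB n:ℕ):ℝ) * h := by
    have k2 : 8 * (Real.log 2 + 1) ≤ Real.log n * h := by
      rw [div_le_iff₀ hh] at hlog; linarith
    have k1 : Real.log n * h ≤ C * Real.log n * h := by
      nlinarith [mul_nonneg (mul_nonneg (by linarith : (0:ℝ) ≤ C - 1) hlogn) hh.le]
    have klog2 : (0:ℝ) < Real.log 2 := Real.log_pos (by norm_num)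
    have key : (8 * (Real.log 2 + 1)) * ((n:ℝ)/8) ≤
        (C * Real.log n * h) * (((NB n:ℕ):ℝ)/(n:ℝ)) := by
      have w1 : 8 * (Real.log 2 + 1) ≤ C * Real.log n * h := by linarith
      have w2 : (n:ℝ)/8 ≤ ((NB n:ℕ):ℝ)/(n:ℝ) := by
        rw [div_le_div_iff₀ (by norm_num) hnpos]
        nlinarith
      have w3 : (0:ℝ) ≤ (n:ℝ)/8 := by positivity
      have w4 : (0:ℝ) ≤ C * Real.log n * h := by positivity
      exact mul_le_mul w1 w2 w3 w4
    calc (n:ℝ) * Real.log 2 + (n:ℝ) = (8 * (Real.log 2 + 1)) * ((n:ℝ)/8) := by ring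
      _ ≤ (C * Real.log n * h) * (((NB n:ℕ):ℝ)/(n:ℝ)) := key
      _ = (C * Real.log n / n) * ((NB n:ℕ):ℝ) * h := by field_simp
  have ht2 : 2^n * Real.exp (-((C * Real.log n / n) * ((NB n:ℕ):ℝ)) * h) ≤
      Real.exp (-(n:ℝ)) := by
    have he : Real.exp (-((C * Real.log n / n) * ((NB n:ℕ):ℝ)) * h) ≤
        Real.exp (-((n:ℝ) * Real.log 2 + (n:ℝ))) := by
      refine Real.exp_le_exp.mpr ?_
      have : -((C * Real.log n / n) * ((NB n:ℕ):ℝ)) * h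
          = -((C * Real.log n / n) * ((NB n:ℕ):ℝ) * h) := by ring
      rw [this]
      linarith
    have h2n : Real.exp (-((n:ℝ) * Real.log 2 + (n:ℝ))) = (2^n : ℝ)⁻¹ * Real.exp (-(n:ℝ)) := by
      rw [Real.exp_neg, Real.exp_add, Real.exp_nat_mul,
        Real.exp_log (by norm_num : (0:ℝ) < 2), mul_inv, Real.exp_neg]
    calc 2^n * Real.exp (-((C * Real.log n / n) * ((NB n:ℕ):ℝ)) * h)
        ≤ 2^n * ((2^n : ℝ)⁻¹ * Real.exp (-(n:ℝ))) := by
          refine mul_le_mul_of_nonneg_left ?_ (by positivity)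
          rw [← h2n]; exact he
      _ = Real.exp (-(n:ℝ)) := by
          rw [← mul_assoc, mul_inv_cancel₀ (by positivity), one_mul]
  linarith

end ER

set_option maxHeartbeats 2000000 in
/-- for `0 < ε < 1/2` and `C = C(ε)` sufficiently large, with
`p = C log n / n`, whp every set `S` of `⌊n/2⌋` vertices of `G(n,p)` satisfies
`|∂S|/|S| < (1/2 + ε)δ(G)`, and consequently `i(G) ≤ (1/2 + ε)δ(G)`. -/
theorem isoConst_half_upper (ε : ℝ) (hε0 : 0 < ε) (hε : ε < 1/2) :
    ∃ C₀ : ℝ, 0 < C₀ ∧ ∀ C : ℝ, C₀ ≤ C →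
      Tendsto (fun n : ℕ => graphMeasure n (C * Real.log n / n)
        {ω | (∀ S : Finset (Fin n), S.card = n / 2 →
            ((edgeBoundary (graphOf ω) S).card : ℝ) <
              (1/2 + ε) * (minDeg (graphOf ω) : ℝ) * (S.card : ℝ)) ∧
          isoConst (graphOf ω) ≤ (1/2 + ε) * (minDeg (graphOf ω) : ℝ)})
        atTop (nhds 1) := by
  have hθ0 : 0 < ε/4 := by linarith
  have hθ1 : ε/4 < 1 := by linarith
  have hg : 0 < ε/4 + (1-ε/4) * Real.log (1-ε/4) := ER.g_pos hθ0 hθ1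
  have hhp : 0 < (1+ε/4) * Real.log (1+ε/4) - ε/4 := ER.h_pos hθ0
  refine ⟨max 1 (4 / (ε/4 + (1-ε/4) * Real.log (1-ε/4))),
    lt_of_lt_of_le one_pos (le_max_left _ _), fun C hC => ?_⟩
  have hC1 : 1 ≤ C := le_trans (le_max_left _ _) hC
  have hC4 : 4 ≤ C * (ε/4 + (1-ε/4) * Real.log (1-ε/4)) := by
    have h' := le_trans (le_max_right _ _) hC
    rw [div_le_iff₀ hg] at h'
    linarith
  -- eventual facts
  have E1 : ∀ᶠ n : ℕ in atTop, 2 ≤ n := eventually_ge_atTop 2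
  have E8 : ∀ᶠ n : ℕ in atTop, 8 ≤ n := eventually_ge_atTop 8
  have hdivto : Tendsto (fun n : ℕ => C * Real.log n / n) atTop (nhds 0) := by
    have h0 : Tendsto (fun x : ℝ => Real.log x / x) atTop (nhds 0) :=
      Real.isLittleO_log_id_atTop.tendsto_div_nhds_zero
    have h1 := (h0.comp tendsto_natCast_atTop_atTop).const_mul C
    simp only [mul_zero] at h1
    convert h1 using 2 with n
    simp [Function.comp, mul_div_assoc]
  have E2 : ∀ᶠ n : ℕ in atTop, C * Real.log n / n ≤ 1 :=
    hdivto.eventually (eventually_le_nhds one_pos)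
  have E3 : ∀ᶠ n : ℕ in atTop, 4/ε ≤ (n:ℝ) :=
    tendsto_natCast_atTop_atTop.eventually_ge_atTop _
  have E4 : ∀ᶠ n : ℕ in atTop,
      8 * (Real.log 2 + 1) / ((1+ε/4) * Real.log (1+ε/4) - ε/4) ≤ Real.log n :=
    (Real.tendsto_log_atTop.comp tendsto_natCast_atTop_atTop).eventually_ge_atTop _
  -- main lower bound on the measure
  have key : ∀ᶠ n : ℕ in atTop,
      ENNReal.ofReal (1 - ((n:ℝ)⁻¹ + Real.exp (-(n:ℝ)))) ≤
        graphMeasure n (C * Real.log n / n)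
          {ω | (∀ S : Finset (Fin n), S.card = n / 2 →
              ((edgeBoundary (graphOf ω) S).card : ℝ) <
                (1/2 + ε) * (minDeg (graphOf ω) : ℝ) * (S.card : ℝ)) ∧
            isoConst (graphOf ω) ≤ (1/2 + ε) * (minDeg (graphOf ω) : ℝ)} := by
    filter_upwards [E1, E8, E2, E3, E4] with n hn2 hn8 hp1 hnε hlogn
    have hn8R : (8:ℝ) ≤ (n:ℝ) := by exact_mod_cast hn8
    have hlogpos : 0 < Real.log n := Real.log_pos (by linarith)
    have hnpos : (0:ℝ) < n := by linarith
    have hp0 : 0 < C * Real.log n / n := by positivity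
    -- the ε-arithmetic inequality
    have hnε4 : 4 ≤ (n:ℝ) * ε := by
      rw [div_le_iff₀ hε0] at hnε; linarith
    have hA : (1+ε/4) * ((n - n/2 : ℕ) : ℝ) ≤ (1/2 + ε) * (1-ε/4) * ((n-1 : ℕ) : ℝ) := by
      have c1 : ((n - n/2 : ℕ):ℝ) * 2 ≤ (n:ℝ) + 1 := by
        have hnat : (n - n/2) * 2 ≤ n + 1 := by omega
        exact_mod_cast hnat
      have c2 : ((n-1:ℕ):ℝ) = (n:ℝ) - 1 := by
        rw [Nat.cast_sub (by omega)]; norm_num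
      have c3 : (0:ℝ) ≤ ((n - n/2 : ℕ):ℝ) := Nat.cast_nonneg _
      have hee : ε * ε ≤ ε / 2 := by nlinarith
      rw [c2]
      nlinarith [mul_le_mul_of_nonneg_left c1 (by linarith : (0:ℝ) ≤ 1 + ε/4),
        mul_le_mul_of_nonneg_right hee (by linarith : (0:ℝ) ≤ (n:ℝ))]
    -- measure bound on the bad set
    have hbad : graphMeasure n (C * Real.log n / n)
        (ER.BadD n (C * Real.log n / n) (ε/4) ∪ ER.BadB n (C * Real.log n / n) (ε/4)) ≤
        ENNReal.ofReal ((n:ℝ)⁻¹ + Real.exp (-(n:ℝ))) := by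
      refine le_trans (measure_union_le _ _) ?_
      refine le_trans (add_le_add
        (ER.badD_bound hp0.le hp1 hθ0 hθ1) (ER.badB_bound hp0.le hp1 hθ0)) ?_
      rw [← ENNReal.ofReal_add (by positivity) (by positivity)]
      exact ENNReal.ofReal_le_ofReal
        (ER.final_est hg hhp hC1 hC4 n hn2 hlogn)
    have hcompl : graphMeasure n (C * Real.log n / n)
        (ER.BadD n (C * Real.log n / n) (ε/4) ∪ ER.BadB n (C * Real.log n / n) (ε/4))ᶜ =
        1 - graphMeasure n (C * Real.log n / n)
          (ER.BadD n (C * Real.log n / n) (ε/4) ∪ ER.BadB n (C * Real.log n / n) (ε/4)) := by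
      rw [measure_compl (ER.meas_set _) (measure_ne_top _ _), measure_univ]
    calc ENNReal.ofReal (1 - ((n:ℝ)⁻¹ + Real.exp (-(n:ℝ))))
        = 1 - ENNReal.ofReal ((n:ℝ)⁻¹ + Real.exp (-(n:ℝ))) := by
          rw [ENNReal.ofReal_sub _ (by positivity), ENNReal.ofReal_one]
      _ ≤ 1 - graphMeasure n (C * Real.log n / n)
            (ER.BadD n (C * Real.log n / n) (ε/4) ∪ ER.BadB n (C * Real.log n / n) (ε/4)) :=
          tsub_le_tsub_left hbad 1
      _ = graphMeasure n (C * Real.log n / n)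
            (ER.BadD n (C * Real.log n / n) (ε/4) ∪ ER.BadB n (C * Real.log n / n) (ε/4))ᶜ :=
          hcompl.symm
      _ ≤ _ := measure_mono (ER.good_sub hn2 hp0 hθ0 hθ1 hε0 hA)
  -- squeeze
  have hupper : ∀ᶠ n : ℕ in atTop, graphMeasure n (C * Real.log n / n)
      {ω | (∀ S : Finset (Fin n), S.card = n / 2 →
          ((edgeBoundary (graphOf ω) S).card : ℝ) <
            (1/2 + ε) * (minDeg (graphOf ω) : ℝ) * (S.card : ℝ)) ∧
        isoConst (graphOf ω) ≤ (1/2 + ε) * (minDeg (graphOf ω) : ℝ)} ≤ 1 :=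
    Eventually.of_forall fun n => prob_le_one
  have hlo : Tendsto (fun n : ℕ => ENNReal.ofReal (1 - ((n:ℝ)⁻¹ + Real.exp (-(n:ℝ)))))
      atTop (nhds 1) := by
    have hreal : Tendsto (fun n : ℕ => 1 - ((n:ℝ)⁻¹ + Real.exp (-(n:ℝ)))) atTop (nhds 1) := by
      have hi : Tendsto (fun n : ℕ => ((n:ℝ))⁻¹) atTop (nhds 0) :=
        tendsto_natCast_atTop_atTop.inv_tendsto_atTop
      have hex : Tendsto (fun n : ℕ => Real.exp (-(n:ℝ))) atTop (nhds 0) :=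
        Real.tendsto_exp_neg_atTop_nhds_zero.comp tendsto_natCast_atTop_atTop
      have hone : Tendsto (fun _ : ℕ => (1:ℝ)) atTop (nhds 1) := tendsto_const_nhds
      have := hone.sub (hi.add hex)
      norm_num at this
      exact this
    have := ENNReal.tendsto_ofReal hreal
    rwa [ENNReal.ofReal_one] at this
  exact tendsto_of_tendsto_of_tendsto_of_le_of_le' hlo tendsto_const_nhds key hupper

end
end

section
/- Let n be large, d = o(log n), r = (log n)/d, and p = (log n + (d−1) log r + 2d + ω(n))/n with ω(n) → ∞, ω(n) ≤ log log r. Then for a fixed vertex v in G(n,p), Pr[deg(v) = d−1] ≤ (1/n)·exp(−(1−o(1))(d + ω(n))); consequently Pr[deg(v) ≤ d−1] ≤ (d/n)·exp(−(1−o(1))(d+ω(n))), and with high probability δ(G(n,p)) ≥ d. -/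
set_option maxHeartbeats 1000000


open MeasureTheory Filter Finset
open scoped ENNReal Classical Topology

noncomputable section

variable {V : Type*}

lemma measSet {n : ℕ} (s : Set (Sym2 (Fin n) → Bool)) : MeasurableSet s := by
  have h1 : ∀ ω : Sym2 (Fin n) → Bool, MeasurableSet {ω} := by
    intro ω
    have : {ω} = ⋂ e, (fun f : Sym2 (Fin n) → Bool => f e) ⁻¹' {ω e} := by
      ext f; simp [funext_iff]
    rw [this]
    exact MeasurableSet.iInter fun e => (measurable_pi_apply e) (measurableSet_singleton _)
  have : s = ⋃ ω ∈ s, {ω} := by simp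
  rw [this]
  exact MeasurableSet.biUnion s.to_countable fun ω _ => h1 ω

instance graphMeasureProb (n : ℕ) (p : ℝ) : IsProbabilityMeasure (graphMeasure n p) := by
  unfold graphMeasure; infer_instance

lemma measure_filter_eq {n : ℕ} {p : ℝ} (hp0 : 0 ≤ p) (hp1 : p ≤ 1) (v : Fin n)
    (T : Finset (Fin n)) (hT : T ⊆ univ.erase v) :
    graphMeasure n p {ω | (univ.erase v).filter (fun u => ω s(v,u) = true) = T} =
      ENNReal.ofReal p ^ T.card * ENNReal.ofReal (1-p) ^ (n - 1 - T.card) := by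
  classical
  set q0 : NNReal := min (Real.toNNReal p) 1 with hq0def
  set q : ℝ≥0∞ := (q0 : ℝ≥0∞) with hqdef
  have hq : q = ENNReal.ofReal p := by
    rw [hqdef, hq0def, min_eq_left (Real.toNNReal_le_one.mpr hp1)]; rfl
  set μB := (PMF.bernoulli q0 (min_le_right _ _)).toMeasure with hμB
  set s : Sym2 (Fin n) → Set Bool :=
    fun e => {b | ∀ u : Fin n, u ≠ v → e = s(v,u) → (b = true ↔ u ∈ T)} with hs
  have hset : {ω : Sym2 (Fin n) → Bool | (univ.erase v).filter (fun u => ω s(v,u) = true) = T}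
      = Set.univ.pi s := by
    ext ω
    simp only [Set.mem_setOf_eq, Set.mem_pi, Set.mem_univ, forall_true_left, hs]
    constructor
    · intro h e
      intro u hu he
      subst he
      constructor
      · intro hωe; rw [← h]; simp [Finset.mem_filter, Finset.mem_erase, hu, hωe]
      · intro hut
        have := h ▸ hut
        simp only [Finset.mem_filter] at this
        exact this.2
    · intro h
      ext u
      simp only [Finset.mem_filter, Finset.mem_erase, Finset.mem_univ, true_and, and_true]
      constructor
      · rintro ⟨hu, hω⟩; exact (h s(v,u) u hu rfl).mp hω
      · intro hut
        have hu : u ≠ v := (Finset.mem_erase.mp (hT hut)).1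
        exact ⟨hu, (h s(v,u) u hu rfl).mpr hut⟩
  rw [hset]
  show Measure.pi (fun _ => μB) _ = _
  rw [Measure.pi_pi]
  -- values of the Bernoulli measure
  have htrue : μB {true} = q := by
    rw [hμB, PMF.toMeasure_apply_singleton _ _ (measurableSet_singleton _)]
    rfl
  have hfalse : μB {false} = 1 - q := by
    rw [hμB, PMF.toMeasure_apply_singleton _ _ (measurableSet_singleton _)]
    rfl
  have huniv : μB Set.univ = 1 := by
    rw [hμB]; simp
    exact add_tsub_cancel_of_le (PMF.coe_le_one _ _)
  set ι : Fin n → Sym2 (Fin n) := fun u => s(v,u) with hι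
  set E : Finset (Sym2 (Fin n)) := (univ.erase v).image ι with hE
  have hout : ∀ e ∈ (univ : Finset (Sym2 (Fin n))), e ∉ E → μB (s e) = 1 := by
    intro e _ he
    have : s e = Set.univ := by
      ext b
      simp only [hs, Set.mem_setOf_eq, Set.mem_univ, iff_true]
      intro u hu heq
      exfalso
      exact he (Finset.mem_image.mpr ⟨u, Finset.mem_erase.mpr ⟨hu, Finset.mem_univ u⟩, heq.symm⟩)
    rw [this, huniv]
  have hprodE : ∏ e : Sym2 (Fin n), μB (s e) = ∏ e ∈ E, μB (s e) :=
    (Finset.prod_subset (Finset.subset_univ E) hout).symm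
  have hinj : ∀ a ∈ univ.erase v, ∀ b ∈ univ.erase v, ι a = ι b → a = b := by
    intro a _ b _ h
    exact Sym2.congr_right.mp h
  have hprodI : ∏ e ∈ E, μB (s e) = ∏ u ∈ univ.erase v, μB (s (ι u)) := by
    rw [hE, Finset.prod_image hinj]
  have hval : ∀ u ∈ univ.erase v, μB (s (ι u)) = if u ∈ T then q else 1 - q := by
    intro u hu
    have hu' : u ≠ v := (Finset.mem_erase.mp hu).1
    have hseq : s (ι u) = if u ∈ T then {true} else {false} := by
      ext b
      simp only [hs, hι, Set.mem_setOf_eq]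
      constructor
      · intro h
        have := h u hu' rfl
        by_cases hb : u ∈ T
        · simp [hb, this.mpr hb]
        · simp only [hb, if_false, Set.mem_singleton_iff]
          cases b
          · rfl
          · exact absurd (this.mp rfl) hb
      · intro hb u' hu'' heq
        have : u' = u := Sym2.congr_right.mp heq.symm
        subst this
        by_cases hb' : u' ∈ T <;> simp [hb'] at hb <;> simp [hb, hb']
    rw [hseq]
    by_cases hb : u ∈ T <;> simp [hb, htrue, hfalse]
  rw [hprodE, hprodI, Finset.prod_congr rfl hval, Finset.prod_ite, Finset.prod_const,
    Finset.prod_const]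
  have h1 : Finset.filter (fun u => u ∈ T) (univ.erase v) = T := by
    rw [Finset.filter_mem_eq_inter]
    exact Finset.inter_eq_right.mpr hT
  have h2 : Finset.filter (fun u => u ∉ T) (univ.erase v) = (univ.erase v) \ T := by
    rw [Finset.sdiff_eq_filter]
  have hcard : ((univ.erase v) \ T).card = n - 1 - T.card := by
    rw [Finset.card_sdiff_of_subset hT, Finset.card_erase_of_mem (Finset.mem_univ v), Finset.card_univ,
      Fintype.card_fin]
  have h1mq : 1 - q = ENNReal.ofReal (1 - p) := by
    rw [hq, ← ENNReal.ofReal_one, ← ENNReal.ofReal_sub _ hp0]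
  rw [h1, h2, hcard, h1mq, hq]

lemma neighborFinset_eq {n : ℕ} (ω : Sym2 (Fin n) → Bool) (v : Fin n) :
    (graphOf ω).neighborFinset v = (univ.erase v).filter (fun u => ω s(v,u) = true) := by
  ext u
  simp only [SimpleGraph.mem_neighborFinset, Finset.mem_filter, Finset.mem_erase,
    Finset.mem_univ, true_and, and_true]
  show (v ≠ u ∧ ω s(v,u) = true) ↔ _
  constructor
  · rintro ⟨h1, h2⟩; exact ⟨h1.symm, h2⟩
  · rintro ⟨h1, h2⟩; exact ⟨h1.symm, h2⟩

lemma measure_deg_eq {n : ℕ} {p : ℝ} (hp0 : 0 ≤ p) (hp1 : p ≤ 1) (v : Fin n) (k : ℕ) :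
    graphMeasure n p {ω | (graphOf ω).degree v = k} =
      ((n-1).choose k : ℝ≥0∞) *
        (ENNReal.ofReal p ^ k * ENNReal.ofReal (1-p) ^ (n - 1 - k)) := by
  classical
  have hdeg : ∀ ω : Sym2 (Fin n) → Bool,
      (graphOf ω).degree v = ((univ.erase v).filter (fun u => ω s(v,u) = true)).card := by
    intro ω
    rw [SimpleGraph.degree, neighborFinset_eq]
  have hset : {ω : Sym2 (Fin n) → Bool | (graphOf ω).degree v = k} =
      ⋃ T ∈ (univ.erase v).powersetCard k,
        {ω : Sym2 (Fin n) → Bool | (univ.erase v).filter (fun u => ω s(v,u) = true) = T} := by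
    ext ω
    simp only [Set.mem_setOf_eq, Set.mem_iUnion, hdeg, Finset.mem_powersetCard]
    constructor
    · intro h
      exact ⟨_, ⟨Finset.filter_subset _ _, h⟩, rfl⟩
    · rintro ⟨T, ⟨hT1, hT2⟩, hT3⟩
      rw [hT3, hT2]
  rw [hset, measure_biUnion_finset]
  · rw [Finset.sum_congr rfl (fun T hT => measure_filter_eq hp0 hp1 v T
      (Finset.mem_powersetCard.mp hT).1)]
    have : ∀ T ∈ (univ.erase v).powersetCard k, ENNReal.ofReal p ^ T.card *
        ENNReal.ofReal (1-p) ^ (n - 1 - T.card) =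
        ENNReal.ofReal p ^ k * ENNReal.ofReal (1-p) ^ (n - 1 - k) := by
      intro T hT
      rw [(Finset.mem_powersetCard.mp hT).2]
    rw [Finset.sum_congr rfl this, Finset.sum_const, Finset.card_powersetCard,
      Finset.card_erase_of_mem (Finset.mem_univ v), Finset.card_univ, Fintype.card_fin,
      nsmul_eq_mul]
  · intro T hT T' hT' hne
    simp only [Function.onFun, Set.disjoint_left, Set.mem_setOf_eq]
    intro ω h1 h2
    exact hne (h1 ▸ h2 ▸ rfl)
  · intro T _
    exact measSet _

lemma measure_deg_le {n : ℕ} {p : ℝ} (hp0 : 0 ≤ p) (hp1 : p ≤ 1) (v : Fin n) (D : ℕ) :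
    graphMeasure n p {ω | (graphOf ω).degree v ≤ D} =
      ∑ k ∈ Finset.range (D+1), ((n-1).choose k : ℝ≥0∞) *
        (ENNReal.ofReal p ^ k * ENNReal.ofReal (1-p) ^ (n - 1 - k)) := by
  classical
  have hset : {ω : Sym2 (Fin n) → Bool | (graphOf ω).degree v ≤ D} =
      ⋃ k ∈ Finset.range (D+1), {ω : Sym2 (Fin n) → Bool | (graphOf ω).degree v = k} := by
    ext ω
    simp only [Set.mem_setOf_eq, Set.mem_iUnion, Finset.mem_range, Nat.lt_succ_iff]
    constructor
    · intro h; exact ⟨_, h, rfl⟩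
    · rintro ⟨k, hk, h⟩; omega
  rw [hset, measure_biUnion_finset]
  · exact Finset.sum_congr rfl fun k _ => measure_deg_eq hp0 hp1 v k
  · intro a _ b _ hne
    simp only [Function.onFun, Set.disjoint_left, Set.mem_setOf_eq]
    intro ω h1 h2
    exact hne (h1 ▸ h2 ▸ rfl)
  · intro k _
    exact measSet _

lemma toReal_term {p : ℝ} (hp0 : 0 ≤ p) (hp1 : p ≤ 1) (k m : ℕ) (C : ℕ) :
    ((C : ℝ≥0∞) * (ENNReal.ofReal p ^ k * ENNReal.ofReal (1-p) ^ m)).toReal =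
      (C : ℝ) * (p ^ k * (1-p) ^ m) := by
  rw [ENNReal.toReal_mul, ENNReal.toReal_mul, ENNReal.toReal_pow, ENNReal.toReal_pow,
    ENNReal.toReal_ofReal hp0, ENNReal.toReal_ofReal (by linarith), ENNReal.toReal_natCast]

lemma pow_le_exp_mul_factorial : ∀ k : ℕ, (k:ℝ)^k ≤ Real.exp 1 ^ k * k.factorial := by
  intro k
  induction k with
  | zero => simp
  | succ m ih =>
    rcases Nat.eq_zero_or_pos m with rfl | hm
    · simpa using Real.one_le_exp (by norm_num)
    have hm' : (0:ℝ) < m := by exact_mod_cast hm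
    have key : ((m:ℝ)+1)^m ≤ Real.exp 1 * (m:ℝ)^m := by
      have h1 : ((m:ℝ)+1) = m * (1 + 1/m) := by field_simp
      have h2 : (1 + 1/(m:ℝ))^m ≤ Real.exp (1/m) ^ m := by
        apply pow_le_pow_left₀ (by positivity)
        linarith [Real.add_one_le_exp (1/(m:ℝ))]
      have h3 : Real.exp (1/(m:ℝ)) ^ m = Real.exp 1 := by
        rw [← Real.exp_nat_mul]
        congr 1
        field_simp
      calc ((m:ℝ)+1)^m = (m:ℝ)^m * (1 + 1/m)^m := by rw [h1, mul_pow]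
        _ ≤ (m:ℝ)^m * Real.exp 1 := by
            rw [← h3]; exact mul_le_mul_of_nonneg_left h2 (by positivity)
        _ = Real.exp 1 * (m:ℝ)^m := by ring
    have hfact : (m+1).factorial = (m+1) * m.factorial := rfl
    calc ((m+1:ℕ):ℝ)^(m+1) = ((m:ℝ)+1) * ((m:ℝ)+1)^m := by push_cast; ring
      _ ≤ ((m:ℝ)+1) * (Real.exp 1 * (m:ℝ)^m) :=
          mul_le_mul_of_nonneg_left key (by positivity)
      _ ≤ ((m:ℝ)+1) * (Real.exp 1 * (Real.exp 1 ^ m * m.factorial)) := by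
          have := mul_le_mul_of_nonneg_left ih (Real.exp_pos 1).le
          exact mul_le_mul_of_nonneg_left (by nlinarith [Real.exp_pos 1]) (by positivity)
      _ = Real.exp 1 ^ (m+1) * ((m+1) * m.factorial) := by ring
      _ = Real.exp 1 ^ (m+1) * (m+1).factorial := by
          rw [hfact]; push_cast; ring

lemma chain_le {b : ℕ → ℝ} : ∀ D : ℕ, (∀ j, j < D → b j ≤ b (j+1)) → ∀ k, k ≤ D → b k ≤ b D := by
  intro D
  induction D with
  | zero => intro _ k hk; rw [Nat.le_zero.mp hk]
  | succ m ih =>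
    intro h k hk
    rcases Nat.eq_or_lt_of_le hk with rfl | hlt
    · exact le_rfl
    · exact (ih (fun j hj => h j (by omega)) k (by omega)).trans (h m (by omega))

lemma binom_step (n j : ℕ) (pp : ℝ) (h0 : 0 < pp) (h1 : pp ≤ 1) (hj : j + 1 ≤ n - 1)
    (hstep : ((j:ℝ)+1)*(1-pp) ≤ ((n:ℝ)-1-j)*pp) (hn : 1 ≤ n) :
    ((n-1).choose j : ℝ) * pp^j * (1-pp)^(n-1-j) ≤
      ((n-1).choose (j+1) : ℝ) * pp^(j+1) * (1-pp)^(n-1-(j+1)) := by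
  set m := n - 1 with hm
  have hjm : j + 1 ≤ m := hj
  have hcast : ((n:ℝ) - 1 - j) = ((m - j : ℕ) : ℝ) := by
    have : ((m : ℕ):ℝ) = (n:ℝ) - 1 := by
      rw [hm]; push_cast [Nat.cast_sub hn]; ring
    rw [Nat.cast_sub (by omega), ← this]
  have key : ((m.choose (j+1)):ℝ) * (j+1) = (m.choose j) * ((m - j : ℕ):ℝ) := by
    exact_mod_cast congrArg (Nat.cast (R := ℝ)) (Nat.choose_succ_right_eq m j)
  have hpow : (1-pp)^(m-j) = (1-pp)^(m-(j+1)) * (1-pp) := by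
    rw [← pow_succ]
    congr 1
    omega
  have hMj : (0:ℝ) < ((m - j:ℕ):ℝ) := by
    have : 0 < m - j := by omega
    exact_mod_cast this
  have h1p : (0:ℝ) ≤ 1 - pp := by linarith
  have hb1 : (0:ℝ) ≤ ((m.choose (j+1)):ℝ) * pp^(j+1) * (1-pp)^(m-(j+1)) :=
    mul_nonneg (mul_nonneg (by positivity) (by positivity)) (pow_nonneg h1p _)
  have heq : ((m.choose j):ℝ) * pp^j * (1-pp)^(m-j) * (((m-j:ℕ):ℝ) * pp) =
      ((m.choose (j+1)):ℝ) * pp^(j+1) * (1-pp)^(m-(j+1)) * (((j:ℝ)+1) * (1-pp)) := by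
    rw [hpow]
    linear_combination (-(pp ^ j) * pp * (1 - pp) ^ (m - (j + 1)) * (1 - pp)) * key
  have hle : ((m.choose j):ℝ) * pp^j * (1-pp)^(m-j) * (((m-j:ℕ):ℝ) * pp) ≤
      ((m.choose (j+1)):ℝ) * pp^(j+1) * (1-pp)^(m-(j+1)) * (((m-j:ℕ):ℝ) * pp) := by
    rw [heq]
    apply mul_le_mul_of_nonneg_left _ hb1
    rw [← hcast] at *
    exact hstep
  exact le_of_mul_le_mul_right hle (by positivity)

lemma core_le (n dd : ℕ) (w : ℝ) (hn : 3 ≤ n) (hd1 : 1 ≤ dd)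
    (L r p : ℝ) (hL : L = Real.log n) (hr : r = L / dd)
    (hpdef : p = (L + ((dd:ℝ)-1) * Real.log r + 2*dd + w) / n)
    (hdL : 2*(dd:ℝ) ≤ L) (hrbig : Real.exp 1 ≤ r) (hw0 : 0 < w) (hp2 : p ≤ 1/2) :
    ((n-1).choose (dd-1) : ℝ) * p^(dd-1) * (1-p)^(n-dd) ≤
      (1/n) * Real.exp (-(1 - (Real.log r / r + 2/r + p)) * ((dd:ℝ) + w)) := by
  have hn0 : (0:ℝ) < n := by positivity
  have hd0 : (0:ℝ) < dd := by exact_mod_cast hd1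
  have hL0 : (0:ℝ) < L := by nlinarith
  have hr0 : (0:ℝ) < r := lt_of_lt_of_le (Real.exp_pos 1) hrbig
  have hlogr : 1 ≤ Real.log r := by
    calc (1:ℝ) = Real.log (Real.exp 1) := (Real.log_exp 1).symm
    _ ≤ Real.log r := Real.log_le_log (Real.exp_pos 1) hrbig
  have hlogr0 : 0 ≤ Real.log r := by linarith
  set k : ℕ := dd - 1 with hk
  have hkd : (k:ℝ) = (dd:ℝ) - 1 := by
    rw [hk]; push_cast [Nat.cast_sub hd1]; ring
  have hkd' : (k:ℝ) ≤ dd := by linarith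
  have hk0 : (0:ℝ) ≤ k := by positivity
  set P : ℝ := L + ((dd:ℝ)-1) * Real.log r + 2*dd + w with hP
  have hP0 : 0 < P := by
    have h1 : 0 ≤ ((dd:ℝ)-1) * Real.log r := mul_nonneg (by linarith) hlogr0
    nlinarith
  have hpn : p * n = P := by rw [hpdef]; field_simp
  have hp0 : 0 < p := by rw [hpdef]; positivity
  have hdn : (dd:ℝ) ≤ n := by
    have : L < n := by rw [hL]; exact (Real.log_le_sub_one_of_pos hn0).trans_lt (by linarith)
    linarith
  have hddn : dd ≤ n := by exact_mod_cast hdn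
  have hrd : L = r * dd := by rw [hr]; field_simp
  -- Step 1 : choose * p^k ≤ (P e / k)^k
  have hkk0 : (0:ℝ) < (k:ℝ)^k := by
    rcases Nat.eq_zero_or_pos k with h | h
    · rw [h]; norm_num
    · have : (0:ℝ) < k := by exact_mod_cast h
      positivity
  have hfac0 : (0:ℝ) < k.factorial := by exact_mod_cast k.factorial_pos
  have hfac0 : (0:ℝ) < k.factorial := by exact_mod_cast k.factorial_pos
  have hexp1 : (0:ℝ) < Real.exp 1 := Real.exp_pos 1
  have hstep1 : ((n-1).choose k : ℝ) * p^k ≤ (P * Real.exp 1 / k)^k := by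
    have hchoose : ((n-1).choose k : ℝ) ≤ ((n:ℝ)-1)^k / k.factorial := by
      have h := Nat.choose_le_pow_div (α := ℝ) k (n-1)
      have hcast : ((n-1:ℕ):ℝ) = (n:ℝ) - 1 := by
        push_cast [Nat.cast_sub (by omega : 1 ≤ n)]; ring
      rwa [hcast] at h
    have hn1 : (0:ℝ) ≤ (n:ℝ) - 1 := by linarith
    calc ((n-1).choose k : ℝ) * p^k
        ≤ ((n:ℝ)-1)^k / k.factorial * p^k :=
          mul_le_mul_of_nonneg_right hchoose (by positivity)
      _ = (((n:ℝ)-1)*p)^k / k.factorial := by rw [mul_pow]; ring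
      _ ≤ P^k / k.factorial := by
          have hbase : ((n:ℝ)-1)*p ≤ P := by nlinarith [hpn]
          exact (div_le_div_iff_of_pos_right hfac0).mpr
            (pow_le_pow_left₀ (mul_nonneg hn1 hp0.le) hbase k)
      _ ≤ (P * Real.exp 1 / k)^k := by
          rw [div_pow, mul_pow]
          rw [div_le_div_iff₀ hfac0 hkk0]
          calc P^k * (k:ℝ)^k ≤ P^k * (Real.exp 1 ^ k * k.factorial) :=
                mul_le_mul_of_nonneg_left (pow_le_exp_mul_factorial k) (by positivity)
            _ = P^k * Real.exp 1 ^ k * k.factorial := by ring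
  have hstep2 : (1-p)^(n-dd) ≤ Real.exp (-(p * ((n:ℝ)-dd))) := by
    have h1 : 1 - p ≤ Real.exp (-p) := by
      linarith [Real.add_one_le_exp (-p)]
    have h2 : (1-p)^(n-dd) ≤ Real.exp (-p) ^ (n-dd) :=
      pow_le_pow_left₀ (by linarith) h1 _
    have h3 : Real.exp (-p) ^ (n-dd) = Real.exp (((n-dd:ℕ):ℝ) * (-p)) :=
      (Real.exp_nat_mul _ _).symm
    have h4 : ((n-dd:ℕ):ℝ) = (n:ℝ) - dd := by
      push_cast [Nat.cast_sub hddn]; ring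
    rw [h3, h4] at h2
    convert h2 using 2
    ring
  -- the (P e / k)^k as an exponential
  have hstep4 : (P * Real.exp 1 / k)^k = Real.exp (k * (1 + Real.log P - Real.log k)) := by
    rcases Nat.eq_zero_or_pos k with h | h
    · rw [h]; simp
    · have hk1 : (0:ℝ) < k := by exact_mod_cast h
      have : P * Real.exp 1 / k = Real.exp (1 + Real.log P - Real.log k) := by
        rw [Real.exp_sub, Real.exp_add, Real.exp_log hP0, Real.exp_log hk1]
        ring
      rw [this, ← Real.exp_nat_mul]
  -- final exponent inequality
  have hexpineq : (k:ℝ) * (1 + Real.log P - Real.log k) + (-(p * ((n:ℝ)-dd))) ≤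
      -L + (-(1 - (Real.log r / r + 2/r + p)) * ((dd:ℝ) + w)) := by
    have hB : -(p * ((n:ℝ)-dd)) = -P + p*dd := by
      have : p * ((n:ℝ)-dd) = p*n - p*dd := by ring
      rw [this, hpn]; ring
    have hee0 : 0 ≤ Real.log r / r + 2/r + p := by positivity
    rcases Nat.eq_zero_or_pos k with h | h
    · -- dd = 1
      have hdd1 : (dd:ℝ) = 1 := by
        rw [h] at hkd
        push_cast at hkd
        linarith
      rw [h, hB]
      have hPval : P = L + 2 + w := by rw [hP, hdd1]; ring
      have hprod : 0 ≤ (Real.log r / r + 2/r + p) * (1 + w) :=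
        mul_nonneg hee0 (by linarith)
      rw [hPval, hdd1]
      push_cast
      simp only [Nat.cast_zero, zero_mul, zero_add]
      have hRHS0 : -L + -(1 - (Real.log r / r + 2/r + p)) * (1 + w) =
          -L - (1+w) + (Real.log r / r + 2/r + p) * (1 + w) := by ring
      rw [hRHS0]
      linarith [hprod]
    · have hk1 : (0:ℝ) < k := by exact_mod_cast h
      set X : ℝ := ((k:ℝ)*Real.log r + 2*dd + w)/L with hX
      have hX0 : 0 ≤ X := by
        rw [hX]
        apply div_nonneg _ hL0.le
        have h' := mul_nonneg hk0 hlogr0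
        linarith
      have hPexpand' : P = L + (k:ℝ)*Real.log r + 2*dd + w := by
        rw [hP, ← hkd]
      have hPk : P / k = r * ((dd:ℝ)/k) * (1+X) := by
        rw [hX, hPexpand', hrd]
        field_simp
        ring
      have hlogsplit : Real.log P - Real.log k =
          Real.log r + Real.log ((dd:ℝ)/k) + Real.log (1+X) := by
        rw [← Real.log_div hP0.ne' hk1.ne', hPk, Real.log_mul (by positivity) (by positivity),
          Real.log_mul hr0.ne' (by positivity)]
      have h2 : Real.log ((dd:ℝ)/k) ≤ 1/k := by
        have := Real.log_le_sub_one_of_pos (show (0:ℝ) < (dd:ℝ)/k by positivity)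
        have heq : (dd:ℝ)/k - 1 = 1/k := by
          field_simp
          linarith [hkd]
        linarith
      have h3 : Real.log (1+X) ≤ X := by
        have := Real.log_le_sub_one_of_pos (show (0:ℝ) < 1+X by linarith)
        linarith
      have hkX : (k:ℝ) * X ≤ dd*Real.log r/r + (2*dd+w)/r := by
        rw [hX, hrd]
        have hnum : (k:ℝ) * (((k:ℝ)*Real.log r + 2*dd + w)/(r*dd)) =
            ((k:ℝ)*(k:ℝ)*Real.log r + (k:ℝ)*(2*dd+w))/(r*dd) := by ring
        have hrhs : (dd:ℝ)*Real.log r/r + (2*dd+w)/r =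
            ((dd:ℝ)*(dd:ℝ)*Real.log r + (dd:ℝ)*(2*dd+w))/(r*dd) := by
          field_simp
        rw [hnum, hrhs]
        apply (div_le_div_iff_of_pos_right (show (0:ℝ) < r*dd by positivity)).mpr
        · have e1 : (k:ℝ)*(k:ℝ)*Real.log r ≤ (dd:ℝ)*(dd:ℝ)*Real.log r := by
            have hsq : (k:ℝ)*(k:ℝ) ≤ (dd:ℝ)*(dd:ℝ) := by nlinarith
            exact mul_le_mul_of_nonneg_right hsq hlogr0
          have e2 : (k:ℝ)*(2*(dd:ℝ)+w) ≤ (dd:ℝ)*(2*(dd:ℝ)+w) :=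
            mul_le_mul_of_nonneg_right hkd' (by linarith)
          linarith
      have hA : (k:ℝ) * (1 + Real.log P - Real.log k) ≤
          (k:ℝ) + (k:ℝ)*Real.log r + 1 + (dd*Real.log r/r + (2*dd+w)/r) := by
        have t1 : (k:ℝ)*Real.log ((dd:ℝ)/k) ≤ 1 := by
          have := mul_le_mul_of_nonneg_left h2 hk0
          rwa [mul_one_div, div_self hk1.ne'] at this
        have t2 : (k:ℝ)*Real.log (1+X) ≤ (k:ℝ)*X := mul_le_mul_of_nonneg_left h3 hk0
        have hsplit' : (k:ℝ)*(1 + Real.log P - Real.log k) =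
            k + k*Real.log r + k*Real.log ((dd:ℝ)/k) + k*Real.log (1+X) := by
          rw [show 1 + Real.log P - Real.log k = 1 + (Real.log P - Real.log k) by ring,
            hlogsplit]
          ring
        rw [hsplit']
        linarith [t2.trans hkX]
      have hPexpand : P = L + (k:ℝ)*Real.log r + 2*dd + w := by rw [hP, ← hkd]
      have c1 : (dd:ℝ)*Real.log r/r ≤ Real.log r/r*((dd:ℝ)+w) := by
        have h := mul_le_mul_of_nonneg_left (show (dd:ℝ) ≤ (dd:ℝ)+w by linarith)
          (div_nonneg hlogr0 hr0.le)
        calc (dd:ℝ)*Real.log r/r = Real.log r/r*(dd:ℝ) := by ring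
          _ ≤ Real.log r/r*((dd:ℝ)+w) := h
      have c2 : (2*(dd:ℝ)+w)/r ≤ 2/r*((dd:ℝ)+w) := by
        have hdiff : 2/r*((dd:ℝ)+w) - (2*(dd:ℝ)+w)/r = w/r := by
          field_simp
          ring
        linarith [div_nonneg hw0.le hr0.le]
      have c3 : p*(dd:ℝ) ≤ p*((dd:ℝ)+w) := mul_le_mul_of_nonneg_left (by linarith) hp0.le
      have hRHS : -L + (-(1 - (Real.log r/r + 2/r + p)) * ((dd:ℝ)+w)) =
          -L - ((dd:ℝ)+w) + (Real.log r/r*((dd:ℝ)+w) + 2/r*((dd:ℝ)+w) + p*((dd:ℝ)+w)) := by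
        ring
      rw [hB, hRHS]
      linarith [hA, c1, c2, c3]
  -- assemble
  have h1p : (0:ℝ) ≤ 1 - p := by linarith
  calc ((n-1).choose k : ℝ) * p^k * (1-p)^(n-dd)
      ≤ (P * Real.exp 1 / k)^k * Real.exp (-(p * ((n:ℝ)-dd))) := by
        apply mul_le_mul hstep1 hstep2 (pow_nonneg h1p _)
        rw [hstep4]
        positivity
    _ = Real.exp ((k:ℝ) * (1 + Real.log P - Real.log k) + (-(p * ((n:ℝ)-dd)))) := by
        rw [hstep4, ← Real.exp_add]
    _ ≤ Real.exp (-L + (-(1 - (Real.log r / r + 2/r + p)) * ((dd:ℝ) + w))) :=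
        Real.exp_le_exp.mpr hexpineq
    _ = (1/n) * Real.exp (-(1 - (Real.log r / r + 2/r + p)) * ((dd:ℝ) + w)) := by
        rw [Real.exp_add, hL, Real.exp_neg, Real.exp_log hn0]
        ring

lemma pack (n dd : ℕ) (ww pp : ℝ) (hn : 3 ≤ n) (hd1 : 1 ≤ dd)
    (hpdef : pp = (Real.log n + ((dd:ℝ)-1) * Real.log (Real.log n / dd) + 2*dd + ww) / n)
    (hdL : 2*(dd:ℝ) ≤ Real.log n) (hrbig : Real.exp 1 ≤ Real.log n / dd)
    (hw0 : 0 < ww) (hp2 : pp ≤ 1/2) (v : Fin n) :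
    (graphMeasure n pp {ω | (graphOf ω).degree v = dd - 1}).toReal ≤
      (1/n) * Real.exp (-(1 - (Real.log (Real.log n/dd) / (Real.log n/dd) + 2/(Real.log n/dd)
        + pp)) * ((dd:ℝ) + ww)) ∧
    (graphMeasure n pp {ω | (graphOf ω).degree v ≤ dd - 1}).toReal ≤
      ((dd:ℝ)/n) * Real.exp (-(1 - (Real.log (Real.log n/dd) / (Real.log n/dd) + 2/(Real.log n/dd)
        + pp)) * ((dd:ℝ) + ww)) := by
  set L : ℝ := Real.log n with hL
  set r : ℝ := L / dd with hr
  have hn0 : (0:ℝ) < n := by positivity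
  have hd0 : (0:ℝ) < dd := by exact_mod_cast hd1
  have hL0 : (0:ℝ) < L := by nlinarith
  have hr0 : (0:ℝ) < r := lt_of_lt_of_le (Real.exp_pos 1) hrbig
  have hlogr : 1 ≤ Real.log r := by
    calc (1:ℝ) = Real.log (Real.exp 1) := (Real.log_exp 1).symm
    _ ≤ Real.log r := Real.log_le_log (Real.exp_pos 1) hrbig
  have hlogr0 : 0 ≤ Real.log r := by linarith
  set P : ℝ := L + ((dd:ℝ)-1) * Real.log r + 2*dd + ww with hP
  have hP0 : 0 < P := by
    have h1 : 0 ≤ ((dd:ℝ)-1) * Real.log r := mul_nonneg (by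
      have : (1:ℝ) ≤ dd := by exact_mod_cast hd1
      linarith) hlogr0
    nlinarith
  have hpn : pp * n = P := by rw [hpdef]; field_simp
  have hp0 : 0 < pp := by rw [hpdef]; positivity
  have hp1 : pp ≤ 1 := hp2.trans (by norm_num)
  have hdn : (dd:ℝ) ≤ n := by
    have : L < n := (Real.log_le_sub_one_of_pos hn0).trans_lt (by linarith)
    linarith
  have hddn : dd ≤ n := by exact_mod_cast hdn
  have hLP : L ≤ P := by
    have h1 : 0 ≤ ((dd:ℝ)-1) * Real.log r := mul_nonneg (by
      have : (1:ℝ) ≤ dd := by exact_mod_cast hd1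
      linarith) hlogr0
    nlinarith
  -- the key pointwise bound
  have hcore := core_le n dd ww hn hd1 L r pp hL hr hpdef hdL hrbig hw0 hp2
  have hexp : n - 1 - (dd - 1) = n - dd := by omega
  have hfirst : (graphMeasure n pp {ω | (graphOf ω).degree v = dd - 1}).toReal =
      ((n-1).choose (dd-1) : ℝ) * pp^(dd-1) * (1-pp)^(n-dd) := by
    rw [measure_deg_eq hp0.le hp1 v (dd-1), hexp,
      toReal_term hp0.le hp1 (dd-1) (n-dd) ((n-1).choose (dd-1)), mul_assoc]
  constructor
  · rw [hfirst]; exact hcore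
  -- second inequality
  have hsum : (graphMeasure n pp {ω | (graphOf ω).degree v ≤ dd - 1}).toReal =
      ∑ k ∈ Finset.range dd, ((n-1).choose k : ℝ) * (pp^k * (1-pp)^(n-1-k)) := by
    have hD : dd - 1 + 1 = dd := by omega
    rw [measure_deg_le hp0.le hp1 v (dd-1), hD, ENNReal.toReal_sum]
    · exact Finset.sum_congr rfl fun k _ => toReal_term hp0.le hp1 k (n-1-k) _
    · intro k _
      exact ENNReal.mul_ne_top (ENNReal.natCast_ne_top _)
        (ENNReal.mul_ne_top (ENNReal.pow_ne_top ENNReal.ofReal_ne_top)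
          (ENNReal.pow_ne_top ENNReal.ofReal_ne_top))
  set b : ℕ → ℝ := fun k => ((n-1).choose k : ℝ) * pp^k * (1-pp)^(n-1-k) with hb
  have hstep : ∀ j, j < dd - 1 → b j ≤ b (j+1) := by
    intro j hj
    apply binom_step n j pp hp0 hp1 (by omega) _ (by omega)
    have hjr : (j:ℝ) ≤ (dd:ℝ) - 2 := by
      have : (j:ℕ) ≤ dd - 2 := by omega
      have h2d : 2 ≤ dd := by omega
      have := (Nat.cast_le (α := ℝ)).mpr this
      rwa [Nat.cast_sub h2d] at this
    have h1 : ((j:ℝ)+1)*(1-pp) ≤ (dd:ℝ) := by nlinarith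
    have h2 : ((dd:ℝ)) ≤ ((n:ℝ)-1-j)*pp := by
      have hnd : ((n:ℝ) - dd) ≤ (n:ℝ)-1-j := by linarith
      have h3 : ((n:ℝ)-dd)*pp = P - pp*dd := by
        rw [← hpn]; ring
      have h4 : pp*dd ≤ (1/2)*dd := by nlinarith
      have h5 : ((n:ℝ)-dd)*pp ≤ ((n:ℝ)-1-j)*pp :=
        mul_le_mul_of_nonneg_right hnd hp0.le
      nlinarith
    linarith
  have hchain : ∀ k, k ≤ dd - 1 → b k ≤ b (dd-1) := chain_le (dd-1) hstep
  have hbound : ∑ k ∈ Finset.range dd, ((n-1).choose k : ℝ) * (pp^k * (1-pp)^(n-1-k)) ≤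
      (dd:ℝ) * b (dd-1) := by
    have h := Finset.sum_le_card_nsmul (Finset.range dd) b (b (dd-1))
      (fun k hk => hchain k (by simp only [Finset.mem_range] at hk; omega))
    rw [Finset.card_range, nsmul_eq_mul] at h
    calc ∑ k ∈ Finset.range dd, ((n-1).choose k : ℝ) * (pp^k * (1-pp)^(n-1-k))
        = ∑ k ∈ Finset.range dd, b k := by
          exact Finset.sum_congr rfl fun k _ => by rw [hb]; ring
      _ ≤ (dd:ℝ) * b (dd-1) := h
  rw [hsum]
  have hbdd : b (dd-1) ≤ (1/n) * Real.exp (-(1 - (Real.log r / r + 2/r + pp)) * ((dd:ℝ) + ww)) := by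
    rw [hb]
    simp only
    rw [hexp]
    exact hcore
  calc ∑ k ∈ Finset.range dd, ((n-1).choose k : ℝ) * (pp^k * (1-pp)^(n-1-k))
      ≤ (dd:ℝ) * b (dd-1) := hbound
    _ ≤ (dd:ℝ) * ((1/n) * Real.exp (-(1 - (Real.log r / r + 2/r + pp)) * ((dd:ℝ) + ww))) :=
        mul_le_mul_of_nonneg_left hbdd hd0.le
    _ = ((dd:ℝ)/n) * Real.exp (-(1 - (Real.log r / r + 2/r + pp)) * ((dd:ℝ) + ww)) := by
        ring

lemma self_le_exp_half {x : ℝ} (hx : 0 ≤ x) : x ≤ Real.exp (x/2) := by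
  have h1 : 1 + x/4 ≤ Real.exp (x/4) := by linarith [Real.add_one_le_exp (x/4)]
  have h2 : Real.exp (x/4) * Real.exp (x/4) = Real.exp (x/2) := by
    rw [← Real.exp_add]; ring_nf
  have h7 : (1+x/4)*(1+x/4) ≤ Real.exp (x/4) * Real.exp (x/4) :=
    mul_le_mul h1 h1 (by linarith) (Real.exp_pos _).le
  nlinarith [h7, h2, sq_nonneg (1 - x/4)]

/-- with `d = o(log n)`, `r = log n / d` and
`p = (log n + (d-1) log r + 2d + ω(n))/n` where `ω(n) → ∞`, `ω(n) ≤ log log r`: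
for a fixed vertex `v`, `Pr[deg v = d-1] ≤ (1/n)·e^{-(1-o(1))(d+ω(n))}`, hence
`Pr[deg v ≤ d-1] ≤ (d/n)·e^{-(1-o(1))(d+ω(n))}`, and whp `δ(G(n,p)) ≥ d`. -/
theorem degree_upper_tail (d : ℕ → ℕ) (hd1 : ∀ n, 1 ≤ d n)
    (hd : (fun n : ℕ => (d n : ℝ)) =o[atTop] fun n : ℕ => Real.log n)
    (w : ℕ → ℝ) (hw : Tendsto w atTop atTop)
    (hwle : ∀ᶠ n : ℕ in atTop, w n ≤ Real.log (Real.log (Real.log n / (d n : ℝ))))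
    (p : ℕ → ℝ) (hp : ∀ n : ℕ, p n =
      (Real.log n + ((d n : ℝ) - 1) * Real.log (Real.log n / (d n : ℝ))
        + 2 * (d n : ℝ) + w n) / n) :
    (∃ e : ℕ → ℝ, Tendsto e atTop (nhds 0) ∧ ∀ᶠ n : ℕ in atTop, ∀ v : Fin n,
      (graphMeasure n (p n) {ω | (graphOf ω).degree v = d n - 1}).toReal ≤
        (1 / n) * Real.exp (-(1 - e n) * ((d n : ℝ) + w n)) ∧
      (graphMeasure n (p n) {ω | (graphOf ω).degree v ≤ d n - 1}).toReal ≤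
        ((d n : ℝ) / n) * Real.exp (-(1 - e n) * ((d n : ℝ) + w n))) ∧
    Tendsto (fun n : ℕ => graphMeasure n (p n)
      {ω | ∀ v : Fin n, d n ≤ (graphOf ω).degree v}) atTop (nhds 1) := by
  classical
  set r : ℕ → ℝ := fun n => Real.log n / d n with hrdef
  set e : ℕ → ℝ := fun n => Real.log (Real.log n / (d n : ℝ)) / (Real.log n / (d n : ℝ))
      + 2 / (Real.log n / (d n : ℝ)) + p n with heedef
  have hrn : ∀ m : ℕ, Real.log m / (d m : ℝ) = r m := fun _ => rfl
  have hdc : ∀ n : ℕ, (0:ℝ) < d n := fun n => by exact_mod_cast hd1 n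
  have hlogpos : ∀ᶠ n : ℕ in atTop, (0:ℝ) < Real.log n := by
    filter_upwards [eventually_ge_atTop 3] with n hn
    exact Real.log_pos (by exact_mod_cast (by omega : 1 < n))
  -- r → ∞
  have hdiv : Tendsto (fun n => (d n : ℝ) / Real.log n) atTop (𝓝 0) :=
    hd.tendsto_div_nhds_zero
  have hrtop : Tendsto r atTop atTop := by
    have hmem : ∀ᶠ n : ℕ in atTop, (d n : ℝ) / Real.log n ∈ Set.Ioi (0:ℝ) := by
      filter_upwards [hlogpos] with n hn
      exact div_pos (hdc n) hn
    have h := Filter.Tendsto.inv_tendsto_nhdsGT_zero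
      (tendsto_nhdsWithin_iff.mpr ⟨hdiv, hmem⟩)
    refine h.congr fun n => ?_
    simp only [hrdef, Pi.inv_apply, inv_div]
  have t1 : Tendsto (fun n => Real.log (r n) / r n) atTop (𝓝 0) :=
    (Real.isLittleO_log_id_atTop.tendsto_div_nhds_zero).comp hrtop
  have t2 : Tendsto (fun n => 2 / r n) atTop (𝓝 0) := by
    have h := (tendsto_inv_atTop_zero.comp hrtop).const_mul (2:ℝ)
    simp only [mul_zero] at h
    refine h.congr fun n => ?_
    simp [div_eq_mul_inv]
  have hlogsq : Tendsto (fun n : ℕ => 5 * ((Real.log n)^2 / (n:ℝ))) atTop (𝓝 0) := by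
    have h := ((isLittleO_log_rpow_rpow_atTop (2:ℝ)
      (by norm_num : (0:ℝ) < 1)).tendsto_div_nhds_zero.comp
      (tendsto_natCast_atTop_atTop (R := ℝ))).const_mul (5:ℝ)
    simp only [mul_zero] at h
    refine h.congr fun n => ?_
    simp only [Function.comp_apply]
    rw [show ((2:ℝ)) = ((2:ℕ):ℝ) by norm_num, Real.rpow_natCast, Real.rpow_one]
  have hdLhalf : ∀ᶠ n : ℕ in atTop, 2 * (d n : ℝ) ≤ Real.log n := by
    have h := hd.def (by norm_num : (0:ℝ) < 1/2)
    filter_upwards [h, hlogpos] with n hn hl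
    rw [Real.norm_natCast, Real.norm_eq_abs, abs_of_pos hl] at hn
    linarith
  have hrexp : ∀ᶠ n : ℕ in atTop, Real.exp 1 ≤ r n := hrtop.eventually_ge_atTop _
  have hw1 : ∀ᶠ n : ℕ in atTop, 1 ≤ w n := hw.eventually_ge_atTop 1
  have hpbound : ∀ᶠ n : ℕ in atTop, 0 < p n ∧ p n ≤ 5 * ((Real.log n)^2 / n) := by
    filter_upwards [eventually_ge_atTop 3, hdLhalf, hrexp, hw1, hwle, hlogpos]
      with n hn3 hdL hre hw1' hwle' hlp
    have hn0 : (0:ℝ) < n := by positivity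
    have hr0 : (0:ℝ) < r n := lt_of_lt_of_le (Real.exp_pos 1) hre
    have hlogr1 : 1 ≤ Real.log (r n) := by
      calc (1:ℝ) = Real.log (Real.exp 1) := (Real.log_exp 1).symm
      _ ≤ _ := Real.log_le_log (Real.exp_pos 1) hre
    have hd1' : (1:ℝ) ≤ d n := by exact_mod_cast hd1 n
    have hrL : r n ≤ Real.log n := by
      have := div_le_div_of_nonneg_left hlp.le zero_lt_one hd1'
      rw [div_one] at this
      exact this
    have hlogrL : Real.log (r n) ≤ Real.log n := by
      have := Real.log_le_sub_one_of_pos hr0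
      linarith
    have hwL : w n ≤ Real.log n := by
      rw [hrn n] at hwle'
      have hx : Real.log (Real.log (r n)) ≤ Real.log (r n) - 1 :=
        Real.log_le_sub_one_of_pos (by linarith)
      linarith
    have hL2 : (2:ℝ) ≤ Real.log n := by linarith
    have e1 : ((d n:ℝ)-1)*Real.log (r n) ≤ (Real.log n/2)*Real.log n :=
      mul_le_mul (by linarith) hlogrL (by linarith) (by linarith)
    constructor
    · rw [hp n, hrn n]
      apply div_pos _ hn0
      have h0 : 0 ≤ ((d n:ℝ)-1)*Real.log (r n) :=
        mul_nonneg (by linarith) (by linarith)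
      linarith
    · rw [hp n, hrn n, div_le_iff₀ hn0]
      have expand : 5 * ((Real.log n)^2 / n) * n = 5 * (Real.log n)^2 := by
        field_simp
      rw [expand]
      nlinarith
  have hptend : Tendsto p atTop (𝓝 0) := by
    apply tendsto_of_tendsto_of_tendsto_of_le_of_le' tendsto_const_nhds hlogsq
    · filter_upwards [hpbound] with n hn; exact hn.1.le
    · filter_upwards [hpbound] with n hn; exact hn.2
  have hphalf : ∀ᶠ n : ℕ in atTop, p n ≤ 1/2 := by
    filter_upwards [hptend.eventually_lt_const (by norm_num : (0:ℝ) < 1/2)] with n hn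
    exact hn.le
  have hetend : Tendsto e atTop (𝓝 0) := by
    have h := (t1.add t2).add hptend
    simp only [add_zero] at h
    exact h.congr fun n => rfl
  have hmain : ∀ᶠ n : ℕ in atTop, ∀ v : Fin n,
      (graphMeasure n (p n) {ω | (graphOf ω).degree v = d n - 1}).toReal ≤
        (1 / n) * Real.exp (-(1 - e n) * ((d n : ℝ) + w n)) ∧
      (graphMeasure n (p n) {ω | (graphOf ω).degree v ≤ d n - 1}).toReal ≤
        ((d n : ℝ) / n) * Real.exp (-(1 - e n) * ((d n : ℝ) + w n)) := by
    filter_upwards [eventually_ge_atTop 3, hdLhalf, hrexp, hw1, hphalf] with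
      n hn3 hdL hre hw1' hph
    intro v
    exact pack n (d n) (w n) (p n) hn3 (hd1 n) (hp n) hdL hre (by linarith) hph v
  refine ⟨⟨e, hetend, hmain⟩, ?_⟩
  -- whp part
  have hcompl : ∀ n : ℕ, {ω : Sym2 (Fin n) → Bool | ∀ v : Fin n, d n ≤ (graphOf ω).degree v}
      = (⋃ v : Fin n, {ω : Sym2 (Fin n) → Bool | (graphOf ω).degree v ≤ d n - 1})ᶜ := by
    intro n
    ext ω
    simp only [Set.mem_setOf_eq, Set.mem_compl_iff, Set.mem_iUnion, not_exists]
    constructor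
    · intro h v hv
      have := h v; have := hd1 n; omega
    · intro h v
      have := h v; have := hd1 n; omega
  have heε : ∀ᶠ n : ℕ in atTop, e n ≤ 1/2 := by
    filter_upwards [hetend.eventually_lt_const (by norm_num : (0:ℝ) < 1/2)] with n hn
    exact hn.le
  have hbadle : ∀ᶠ n : ℕ in atTop,
      graphMeasure n (p n) (⋃ v : Fin n,
        {ω : Sym2 (Fin n) → Bool | (graphOf ω).degree v ≤ d n - 1}) ≤
      ENNReal.ofReal (Real.exp (-(w n)/2)) := by
    filter_upwards [hmain, heε, hw1, eventually_ge_atTop 1] with n hm he hw' hn1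
    have hn0 : (0:ℝ) < n := by exact_mod_cast hn1
    have hd0 : (0:ℝ) < d n := hdc n
    -- per-vertex bound
    have hone : ∀ v : Fin n,
        graphMeasure n (p n) {ω : Sym2 (Fin n) → Bool | (graphOf ω).degree v ≤ d n - 1} ≤
        ENNReal.ofReal (((d n : ℝ) / n) * Real.exp (-(1 - e n) * ((d n : ℝ) + w n))) := by
      intro v
      rw [ENNReal.le_ofReal_iff_toReal_le (measure_ne_top _ _) (by positivity)]
      exact (hm v).2
    calc graphMeasure n (p n) (⋃ v : Fin n, _) ≤
        ∑' v : Fin n, graphMeasure n (p n)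
          {ω : Sym2 (Fin n) → Bool | (graphOf ω).degree v ≤ d n - 1} :=
          measure_iUnion_le _
      _ ≤ ∑' _v : Fin n, ENNReal.ofReal (((d n : ℝ) / n) *
            Real.exp (-(1 - e n) * ((d n : ℝ) + w n))) := by
          rw [tsum_fintype, tsum_fintype]
          exact Finset.sum_le_sum fun v _ => hone v
      _ = (n : ℝ≥0∞) * ENNReal.ofReal (((d n : ℝ) / n) *
            Real.exp (-(1 - e n) * ((d n : ℝ) + w n))) := by
          rw [tsum_fintype, Finset.sum_const, Finset.card_univ, Fintype.card_fin,
            nsmul_eq_mul]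
      _ = ENNReal.ofReal ((n:ℝ) * (((d n : ℝ) / n) *
            Real.exp (-(1 - e n) * ((d n : ℝ) + w n)))) := by
          rw [← ENNReal.ofReal_natCast n,
            ← ENNReal.ofReal_mul (by positivity : (0:ℝ) ≤ (n:ℝ))]
      _ ≤ ENNReal.ofReal (Real.exp (-(w n)/2)) := by
          apply ENNReal.ofReal_le_ofReal
          have hsimp : (n:ℝ) * (((d n : ℝ) / n) *
              Real.exp (-(1 - e n) * ((d n : ℝ) + w n))) =
              (d n : ℝ) * Real.exp (-(1 - e n) * ((d n : ℝ) + w n)) := by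
            field_simp
          rw [hsimp]
          -- d * exp(-(1-e)(d+w)) ≤ exp(-w/2)
          have h1 : -(1 - e n) * ((d n : ℝ) + w n) ≤ -((d n : ℝ) + w n)/2 := by
            have hdw : 0 ≤ (d n : ℝ) + w n := by linarith
            nlinarith
          have h2 : Real.exp (-(1 - e n) * ((d n : ℝ) + w n)) ≤
              Real.exp (-((d n : ℝ) + w n)/2) := Real.exp_le_exp.mpr h1
          have h3 : Real.exp (-((d n : ℝ) + w n)/2) =
              Real.exp (-(d n : ℝ)/2) * Real.exp (-(w n)/2) := by
            rw [← Real.exp_add]; ring_nf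
          have h4 : (d n : ℝ) * Real.exp (-(d n : ℝ)/2) ≤ 1 := by
            have h5 := self_le_exp_half hd0.le
            have h6 : Real.exp ((d n:ℝ)/2) * Real.exp (-(d n:ℝ)/2) = 1 := by
              rw [← Real.exp_add, show (d n:ℝ)/2 + -(d n:ℝ)/2 = 0 by ring, Real.exp_zero]
            nlinarith [Real.exp_pos (-(d n:ℝ)/2)]
          calc (d n : ℝ) * Real.exp (-(1 - e n) * ((d n : ℝ) + w n))
              ≤ (d n : ℝ) * (Real.exp (-(d n : ℝ)/2) * Real.exp (-(w n)/2)) := by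
                rw [← h3]; exact mul_le_mul_of_nonneg_left h2 hd0.le
            _ = ((d n : ℝ) * Real.exp (-(d n : ℝ)/2)) * Real.exp (-(w n)/2) := by ring
            _ ≤ 1 * Real.exp (-(w n)/2) :=
                mul_le_mul_of_nonneg_right h4 (Real.exp_pos _).le
            _ = Real.exp (-(w n)/2) := one_mul _
  have hofr : Tendsto (fun n => ENNReal.ofReal (Real.exp (-(w n)/2))) atTop (𝓝 0) := by
    have hwb : Tendsto (fun n => -(w n)/2) atTop atBot :=
      (tendsto_neg_atTop_atBot.comp hw).atBot_div_const (by norm_num)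
    have h := ENNReal.tendsto_ofReal (Real.tendsto_exp_atBot.comp hwb)
    simpa using h
  have hbad0 : Tendsto (fun n : ℕ => graphMeasure n (p n) (⋃ v : Fin n,
      {ω : Sym2 (Fin n) → Bool | (graphOf ω).degree v ≤ d n - 1})) atTop (𝓝 0) :=
    tendsto_of_tendsto_of_tendsto_of_le_of_le' tendsto_const_nhds hofr
      (Filter.Eventually.of_forall fun n => zero_le) hbadle
  have hgood : ∀ n : ℕ, graphMeasure n (p n)
      {ω : Sym2 (Fin n) → Bool | ∀ v : Fin n, d n ≤ (graphOf ω).degree v} =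
      1 - graphMeasure n (p n) (⋃ v : Fin n,
        {ω : Sym2 (Fin n) → Bool | (graphOf ω).degree v ≤ d n - 1}) := by
    intro n
    rw [hcompl n, measure_compl (measSet _) (measure_ne_top _ _), measure_univ]
  have hfin := ENNReal.Tendsto.sub
    (tendsto_const_nhds : Tendsto (fun _ : ℕ => (1:ℝ≥0∞)) atTop (𝓝 1)) hbad0
    (Or.inl ENNReal.one_ne_top)
  simp only [tsub_zero] at hfin
  exact hfin.congr fun n => (hgood n).symm

end
end

section
/- Let p = C log n/n for a constant C > 0. With probability 1 − o(n^{−1/5}), every induced subgraph of G(n,p) on k ≤ n^{1/4} vertices contains at most 2k edges. -/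
open MeasureTheory Filter Finset
open scoped ENNReal Classical

noncomputable section

variable {V : Type*}

/-! ### Auxiliary lemmas -/

lemma measure_allTrue (n : ℕ) (p : ℝ) (T : Finset (Sym2 (Fin n))) :
    graphMeasure n p {ω | ∀ e ∈ T, ω e = true}
      = (min (ENNReal.ofReal p) 1) ^ T.card := by
  have hset : {ω : Sym2 (Fin n) → Bool | ∀ e ∈ T, ω e = true}
      = Set.pi Set.univ (fun e => if e ∈ T then {true} else Set.univ) := by
    ext ω
    simp only [Set.mem_setOf_eq, Set.mem_pi, Set.mem_univ, forall_true_left]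
    constructor
    · intro h e
      by_cases he : e ∈ T <;> simp [he, h e]
    · intro h e he
      have := h e
      simpa [he] using this
  rw [hset, graphMeasure, Measure.pi_pi]
  have hμ : ∀ e : Sym2 (Fin n),
      (PMF.bernoulli (min (Real.toNNReal p) 1) (min_le_right _ _)).toMeasure
        (if e ∈ T then ({true} : Set Bool) else Set.univ)
        = if e ∈ T then (min (ENNReal.ofReal p) 1) else 1 := by
    intro e
    by_cases he : e ∈ T <;> simp only [he, if_true, if_false]
    · rw [PMF.toMeasure_apply_singleton _ _ (measurableSet_singleton _)]
      simp only [PMF.bernoulli_apply, cond_true, ENNReal.coe_min, ENNReal.coe_one]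
      rfl
    · exact measure_univ
  simp_rw [hμ]
  rw [Finset.prod_ite_mem, Finset.univ_inter, Finset.prod_const]

lemma inducedEdges_subset_sym2 {n : ℕ} (ω : Sym2 (Fin n) → Bool) (S : Finset (Fin n)) :
    inducedEdges (graphOf ω) S ⊆ S.sym2 := by
  intro e he
  simp only [inducedEdges, Finset.mem_filter] at he
  exact Finset.mem_sym2_iff.2 he.2

lemma omega_true_of_mem {n : ℕ} (ω : Sym2 (Fin n) → Bool) (S : Finset (Fin n))
    {e : Sym2 (Fin n)} (he : e ∈ inducedEdges (graphOf ω) S) : ω e = true := by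
  simp only [inducedEdges, Finset.mem_filter, SimpleGraph.mem_edgeFinset] at he
  obtain ⟨h1, -⟩ := he
  induction e using Sym2.ind with
  | _ u v => exact (show u ≠ v ∧ ω s(u, v) = true from SimpleGraph.mem_edgeSet _ |>.1 h1).2

lemma badS_subset {n : ℕ} (S : Finset (Fin n)) :
    {ω : Sym2 (Fin n) → Bool | 2 * S.card < (inducedEdges (graphOf ω) S).card}
    ⊆ ⋃ T ∈ S.sym2.powersetCard (2 * S.card + 1), {ω | ∀ e ∈ T, ω e = true} := by
  intro ω hω
  simp only [Set.mem_setOf_eq] at hω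
  obtain ⟨T, hTsub, hTcard⟩ := Finset.exists_subset_card_eq
    (hω : 2 * S.card + 1 ≤ (inducedEdges (graphOf ω) S).card)
  exact Set.mem_biUnion
    (Finset.mem_coe.2 (Finset.mem_powersetCard.2
      ⟨hTsub.trans (inducedEdges_subset_sym2 ω S), hTcard⟩))
    (fun e he => omega_true_of_mem ω S (hTsub he))

lemma measure_badS (n : ℕ) (p : ℝ) (S : Finset (Fin n)) :
    graphMeasure n p {ω | 2 * S.card < (inducedEdges (graphOf ω) S).card}
      ≤ (Nat.choose (S.card ^ 2) (2 * S.card + 1) : ℝ≥0∞)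
          * (min (ENNReal.ofReal p) 1) ^ (2 * S.card + 1) := by
  refine (measure_mono (badS_subset S)).trans ?_
  refine (measure_biUnion_finset_le _ _).trans ?_
  have h : ∀ T ∈ S.sym2.powersetCard (2 * S.card + 1),
      graphMeasure n p {ω | ∀ e ∈ T, ω e = true}
        = (min (ENNReal.ofReal p) 1) ^ (2 * S.card + 1) := by
    intro T hT
    rw [measure_allTrue, (Finset.mem_powersetCard.1 hT).2]
  rw [Finset.sum_congr rfl h, Finset.sum_const, Finset.card_powersetCard, nsmul_eq_mul]
  refine mul_le_mul' ?_ le_rfl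
  have hcard : S.sym2.card ≤ S.card ^ 2 := by
    rw [Finset.card_sym2, Nat.choose_two_right]
    have h1 : (S.card + 1) * (S.card + 1 - 1) ≤ 2 * S.card ^ 2 := by
      simp only [Nat.add_sub_cancel]
      nlinarith [S.card.zero_le]
    exact Nat.div_le_of_le_mul h1
  exact_mod_cast Nat.cast_le.2 (Nat.choose_le_choose _ hcard)

lemma fact_ge_aux (k : ℕ) : k ^ (k + 1) ≤ (2 * k + 1).factorial := by
  have h := @Nat.factorial_mul_pow_le_factorial k (k + 1)
  have h2 : k ^ (k + 1) ≤ (k + 1) ^ (k + 1) :=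
    Nat.pow_le_pow_left (Nat.le_succ k) _
  calc k ^ (k + 1) ≤ (k + 1) ^ (k + 1) := h2
    _ ≤ k.factorial * (k + 1) ^ (k + 1) := Nat.le_mul_of_pos_left _ k.factorial_pos
    _ ≤ (k + (k + 1)).factorial := h
    _ = (2 * k + 1).factorial := by ring_nf

lemma choose_sq_le (k : ℕ) : Nat.choose (k ^ 2) (2 * k + 1) ≤ k ^ (3 * k + 1) := by
  rcases Nat.eq_zero_or_pos k with rfl | hk
  · simp
  have hpos : 0 < k ^ (k + 1) := Nat.pow_pos hk
  refine Nat.le_of_mul_le_mul_right ?_ hpos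
  calc Nat.choose (k ^ 2) (2 * k + 1) * k ^ (k + 1)
      ≤ Nat.choose (k ^ 2) (2 * k + 1) * (2 * k + 1).factorial :=
        Nat.mul_le_mul_left _ (fact_ge_aux k)
    _ = (k ^ 2).descFactorial (2 * k + 1) := by
        rw [Nat.descFactorial_eq_factorial_mul_choose]; ring
    _ ≤ (k ^ 2) ^ (2 * k + 1) := Nat.descFactorial_le_pow _ _
    _ = k ^ (3 * k + 1) * k ^ (k + 1) := by rw [← pow_mul, ← pow_add]; ring_nf

lemma measure_bad_le (n : ℕ) (p : ℝ) (hp : 0 ≤ p) (K : ℕ) :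
    graphMeasure n p {ω | ∃ S : Finset (Fin n), S.card ≤ K ∧
        2 * S.card < (inducedEdges (graphOf ω) S).card}
      ≤ ENNReal.ofReal (∑ k ∈ Finset.range (K + 1),
          (n : ℝ) ^ k * (k : ℝ) ^ (3 * k + 1) * p ^ (2 * k + 1)) := by
  set q := min (ENNReal.ofReal p) 1 with hq
  have hsub : {ω : Sym2 (Fin n) → Bool | ∃ S : Finset (Fin n), S.card ≤ K ∧
        2 * S.card < (inducedEdges (graphOf ω) S).card}
      ⊆ ⋃ k ∈ Finset.range (K + 1), ⋃ S ∈ Finset.powersetCard k (Finset.univ : Finset (Fin n)),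
          {ω | 2 * S.card < (inducedEdges (graphOf ω) S).card} := by
    intro ω hω
    obtain ⟨S, hS1, hS2⟩ := hω
    refine Set.mem_biUnion (Finset.mem_coe.2 (Finset.mem_range.2 (Nat.lt_succ_of_le hS1))) ?_
    exact Set.mem_biUnion (Finset.mem_coe.2
      (Finset.mem_powersetCard.2 ⟨Finset.subset_univ S, rfl⟩)) hS2
  refine (measure_mono hsub).trans ?_
  refine (measure_biUnion_finset_le _ _).trans ?_
  have step1 : ∀ k ∈ Finset.range (K + 1),
      graphMeasure n p (⋃ S ∈ Finset.powersetCard k (Finset.univ : Finset (Fin n)),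
          {ω | 2 * S.card < (inducedEdges (graphOf ω) S).card})
        ≤ ENNReal.ofReal ((n : ℝ) ^ k * (k : ℝ) ^ (3 * k + 1) * p ^ (2 * k + 1)) := by
    intro k _
    refine (measure_biUnion_finset_le _ _).trans ?_
    have hterm : ∀ S ∈ Finset.powersetCard k (Finset.univ : Finset (Fin n)),
        graphMeasure n p {ω | 2 * S.card < (inducedEdges (graphOf ω) S).card}
          ≤ (k ^ (3 * k + 1) : ℝ≥0∞) * q ^ (2 * k + 1) := by
      intro S hS
      have hSk : S.card = k := (Finset.mem_powersetCard.1 hS).2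
      refine (measure_badS n p S).trans ?_
      rw [hSk]
      exact mul_le_mul_left (by exact_mod_cast Nat.cast_le.2 (choose_sq_le k)) _
    refine (Finset.sum_le_sum hterm).trans ?_
    rw [Finset.sum_const, Finset.card_powersetCard, Finset.card_univ, Fintype.card_fin,
      nsmul_eq_mul, ← mul_assoc]
    calc ((n.choose k : ℕ) : ℝ≥0∞) * (k ^ (3 * k + 1) : ℝ≥0∞) * q ^ (2 * k + 1)
        ≤ ((n ^ k : ℕ) : ℝ≥0∞) * ((k ^ (3 * k + 1) : ℕ) : ℝ≥0∞)
            * ENNReal.ofReal (p ^ (2 * k + 1)) := by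
          push_cast
          have hq1 : q ^ (2 * k + 1) ≤ ENNReal.ofReal (p ^ (2 * k + 1)) := by
            rw [ENNReal.ofReal_pow hp]
            exact pow_le_pow_left' (min_le_left _ _) _
          exact mul_le_mul' (mul_le_mul'
            (by exact_mod_cast Nat.cast_le.2 (Nat.choose_le_pow n k)) le_rfl) hq1
      _ = ENNReal.ofReal ((n : ℝ) ^ k * (k : ℝ) ^ (3 * k + 1) * p ^ (2 * k + 1)) := by
          rw [← ENNReal.ofReal_natCast (n ^ k), ← ENNReal.ofReal_natCast (k ^ (3 * k + 1)),
            ← ENNReal.ofReal_mul (by positivity), ← ENNReal.ofReal_mul (by positivity)]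
          push_cast
          ring_nf
  refine (Finset.sum_le_sum step1).trans ?_
  rw [ENNReal.ofReal_sum_of_nonneg (fun i _ => by positivity)]

lemma geom_part (x L : ℝ) (hx : 1 ≤ x) (hL : 0 ≤ L) (hr : L ^ 2 * x ^ (-(1/4) : ℝ) ≤ 1)
    (j : ℕ) : L ^ (2 * j + 3) * x ^ (-(((j : ℝ) + 4) / 4)) ≤ L ^ 3 / x := by
  have hx0 : (0:ℝ) < x := lt_of_lt_of_le one_pos hx
  have e1 : L ^ (2 * j + 3) = L ^ 3 * (L ^ 2) ^ j := by
    rw [← pow_mul, ← pow_add]; ring_nf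
  have e2 : x ^ (-(((j : ℝ) + 4) / 4)) = x ^ (-1 : ℝ) * (x ^ (-(1/4) : ℝ)) ^ j := by
    rw [← Real.rpow_natCast (x ^ (-(1/4) : ℝ)) j, ← Real.rpow_mul hx0.le,
      ← Real.rpow_add hx0]
    congr 1; ring
  rw [e1, e2]
  calc L ^ 3 * (L ^ 2) ^ j * (x ^ (-1 : ℝ) * (x ^ (-(1/4) : ℝ)) ^ j)
      = (L ^ 3 * x ^ (-1 : ℝ)) * (L ^ 2 * x ^ (-(1/4) : ℝ)) ^ j := by
        rw [mul_pow]; ring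
    _ ≤ (L ^ 3 * x ^ (-1 : ℝ)) * 1 := by
        refine mul_le_mul_of_nonneg_left ?_ (by positivity)
        exact pow_le_one₀ (by positivity) hr
    _ = L ^ 3 / x := by rw [mul_one, Real.rpow_neg_one, div_eq_mul_inv]

lemma xpow_eq (x : ℝ) (hx0 : 0 < x) (j : ℕ) :
    x ^ (j + 1) * (x ^ ((1:ℝ)/4)) ^ (3 * (j + 1) + 1) / x ^ (2 * (j + 1) + 1)
      = x ^ (-(((j : ℝ) + 4) / 4)) := by
  rw [← Real.rpow_natCast x (j + 1), ← Real.rpow_natCast (x ^ ((1:ℝ)/4)) (3 * (j + 1) + 1),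
    ← Real.rpow_natCast x (2 * (j + 1) + 1), ← Real.rpow_mul hx0.le,
    ← Real.rpow_add hx0, ← Real.rpow_sub hx0]
  congr 1
  push_cast
  ring

lemma term_le (x L : ℝ) (hx : 1 ≤ x) (hL : 0 ≤ L) (hr : L ^ 2 * x ^ (-(1/4) : ℝ) ≤ 1)
    (k : ℕ) (hk : (k : ℝ) ≤ x ^ ((1:ℝ)/4)) :
    x ^ k * (k : ℝ) ^ (3 * k + 1) * (L / x) ^ (2 * k + 1) ≤ L ^ 3 / x := by
  have hx0 : (0:ℝ) < x := lt_of_lt_of_le one_pos hx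
  rcases Nat.eq_zero_or_pos k with rfl | hk1
  · simp
    positivity
  obtain ⟨j, rfl⟩ : ∃ j, k = j + 1 := ⟨k - 1, (Nat.succ_pred_eq_of_pos hk1).symm⟩
  calc x ^ (j+1) * ((j+1 : ℕ) : ℝ) ^ (3 * (j+1) + 1) * (L / x) ^ (2 * (j+1) + 1)
      ≤ x ^ (j+1) * (x ^ ((1:ℝ)/4)) ^ (3 * (j+1) + 1) * (L / x) ^ (2 * (j+1) + 1) := by
        refine mul_le_mul_of_nonneg_right (mul_le_mul_of_nonneg_left ?_ (by positivity))
          (by positivity)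
        exact pow_le_pow_left₀ (by positivity) hk _
    _ = L ^ (2 * j + 3) * x ^ (-(((j : ℝ) + 4) / 4)) := by
        rw [div_pow, ← xpow_eq x hx0 j]
        have h23 : 2 * (j + 1) + 1 = 2 * j + 3 := by ring
        rw [h23]
        field_simp
    _ ≤ L ^ 3 / x := geom_part x L hx hL hr j

lemma sum_le_bound (n : ℕ) (hn : 1 ≤ n) (L : ℝ) (hL : 0 ≤ L)
    (hr : L ^ 2 * (n : ℝ) ^ (-(1/4) : ℝ) ≤ 1) :
    ∑ k ∈ Finset.range (⌊(n : ℝ) ^ ((1:ℝ)/4)⌋₊ + 1),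
        (n : ℝ) ^ k * (k : ℝ) ^ (3 * k + 1) * (L / n) ^ (2 * k + 1)
      ≤ 2 * L ^ 3 * (n : ℝ) ^ (-(3/4) : ℝ) := by
  set x : ℝ := (n : ℝ)
  have hx : 1 ≤ x := by exact_mod_cast Nat.one_le_cast.2 hn
  have hx0 : (0:ℝ) < x := lt_of_lt_of_le one_pos hx
  have hq1 : (1:ℝ) ≤ x ^ ((1:ℝ)/4) := Real.one_le_rpow hx (by norm_num)
  have hfloor : (⌊x ^ ((1:ℝ)/4)⌋₊ : ℝ) ≤ x ^ ((1:ℝ)/4) :=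
    Nat.floor_le (by positivity)
  have hterm : ∀ k ∈ Finset.range (⌊x ^ ((1:ℝ)/4)⌋₊ + 1),
      x ^ k * (k : ℝ) ^ (3 * k + 1) * (L / x) ^ (2 * k + 1) ≤ L ^ 3 / x := by
    intro k hkmem
    have hk : (k : ℝ) ≤ x ^ ((1:ℝ)/4) := by
      have := Nat.lt_succ_iff.1 (Finset.mem_range.1 hkmem)
      exact le_trans (by exact_mod_cast this) hfloor
    exact term_le x L hx hL hr k hk
  calc ∑ k ∈ Finset.range (⌊x ^ ((1:ℝ)/4)⌋₊ + 1),
        x ^ k * (k : ℝ) ^ (3 * k + 1) * (L / x) ^ (2 * k + 1)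
      ≤ (⌊x ^ ((1:ℝ)/4)⌋₊ + 1) • (L ^ 3 / x) := by
        have := Finset.sum_le_card_nsmul _ _ _ hterm
        simpa using this
    _ = ((⌊x ^ ((1:ℝ)/4)⌋₊ : ℝ) + 1) * (L ^ 3 / x) := by
        rw [nsmul_eq_mul]; push_cast; ring
    _ ≤ (2 * x ^ ((1:ℝ)/4)) * (L ^ 3 / x) := by
        refine mul_le_mul_of_nonneg_right ?_ (by positivity)
        linarith [hfloor, hq1]
    _ = 2 * L ^ 3 * (x ^ ((1:ℝ)/4) / x) := by ring
    _ = 2 * L ^ 3 * x ^ (-(3/4) : ℝ) := by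
        congr 1
        rw [show (-(3/4):ℝ) = 1/4 - 1 by norm_num, Real.rpow_sub hx0, Real.rpow_one]

open Asymptotics in
lemma littleo_f (C : ℝ) :
    (fun n : ℕ => 2 * (C * Real.log n) ^ 3 * (n : ℝ) ^ (-(3/4) : ℝ))
      =o[atTop] (fun n : ℕ => (n : ℝ) ^ (-(1/5 : ℝ))) := by
  have h1 : (fun x : ℝ => Real.log x ^ (3:ℕ)) =o[atTop] (fun x : ℝ => x ^ ((11/20:ℝ))) := by
    have := isLittleO_log_rpow_rpow_atTop (3 : ℝ) (show (0:ℝ) < 11/20 by norm_num)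
    refine this.congr' ?_ (EventuallyEq.refl _ _)
    filter_upwards [eventually_ge_atTop (0:ℝ)] with x hx
    rw [← Real.rpow_natCast (Real.log x) 3]
    norm_num
  have h2 : (fun x : ℝ => 2 * (C * Real.log x) ^ 3 * x ^ (-(3/4) : ℝ))
      =o[atTop] (fun x : ℝ => x ^ (-(1/5 : ℝ))) := by
    have h3 := h1.mul_isBigO (isBigO_refl (fun x : ℝ => 2 * C ^ 3 * x ^ (-(3/4) : ℝ)) atTop)
    have h4 := h3.congr'
      (f₂ := fun x : ℝ => 2 * (C * Real.log x) ^ 3 * x ^ (-(3/4) : ℝ))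
      (g₂ := fun x : ℝ => x ^ ((11/20:ℝ)) * (2 * C ^ 3 * x ^ (-(3/4) : ℝ)))
      (by filter_upwards with x; ring) (EventuallyEq.refl _ _)
    refine h4.trans_isBigO ?_
    have e : (fun x : ℝ => x ^ ((11/20:ℝ)) * (2 * C ^ 3 * x ^ (-(3/4) : ℝ)))
        =ᶠ[atTop] (fun x : ℝ => 2 * C ^ 3 * x ^ (-(1/5) : ℝ)) := by
      filter_upwards [eventually_gt_atTop (0:ℝ)] with x hx0
      rw [show x ^ ((11/20:ℝ)) * (2 * C ^ 3 * x ^ (-(3/4) : ℝ))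
          = 2 * C ^ 3 * (x ^ ((11/20:ℝ)) * x ^ (-(3/4) : ℝ)) by ring, ← Real.rpow_add hx0]
      norm_num
    exact (isBigO_const_mul_self (2 * C ^ 3) _ atTop).congr' e.symm (EventuallyEq.refl _ _)
  exact h2.comp_tendsto tendsto_natCast_atTop_atTop

open Asymptotics in
lemma eventually_small (C : ℝ) :
    ∀ᶠ n : ℕ in atTop, (C * Real.log n) ^ 2 * (n : ℝ) ^ (-(1/4) : ℝ) ≤ 1 := by
  have h1 : (fun x : ℝ => (C * Real.log x) ^ 2) =o[atTop] (fun x : ℝ => x ^ ((1/4:ℝ))) := by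
    have h := (isLittleO_log_rpow_rpow_atTop (2 : ℝ) (show (0:ℝ) < 1/4 by norm_num)).const_mul_left (C ^ 2)
    refine h.congr' ?_ (EventuallyEq.refl _ _)
    filter_upwards [eventually_ge_atTop (0:ℝ)] with x hx
    rw [show (2:ℝ) = ((2:ℕ):ℝ) by norm_num, Real.rpow_natCast]
    ring
  have h2 := (h1.comp_tendsto tendsto_natCast_atTop_atTop).bound one_pos
  filter_upwards [h2, eventually_ge_atTop 1] with n hb hn
  have hx0 : (0:ℝ) < (n:ℝ) := by exact_mod_cast Nat.lt_of_lt_of_le Nat.zero_lt_one hn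
  have hq0 : (0:ℝ) < (n:ℝ) ^ ((1/4:ℝ)) := Real.rpow_pos_of_pos hx0 _
  simp only [Function.comp, norm_pow, Real.norm_eq_abs, one_mul] at hb
  have hb2 : (C * Real.log n) ^ 2 ≤ (n:ℝ) ^ ((1/4:ℝ)) := by
    calc (C * Real.log n) ^ 2 ≤ |(C * Real.log n) ^ 2| := le_abs_self _
      _ ≤ |(n:ℝ) ^ ((1/4:ℝ))| := by
          have := hb
          simpa [abs_pow] using this
      _ = (n:ℝ) ^ ((1/4:ℝ)) := abs_of_pos hq0
  calc (C * Real.log n) ^ 2 * (n : ℝ) ^ (-(1/4) : ℝ)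
      ≤ (n:ℝ) ^ ((1/4:ℝ)) * (n : ℝ) ^ (-(1/4) : ℝ) :=
        mul_le_mul_of_nonneg_right hb2 (Real.rpow_nonneg hx0.le _)
    _ = 1 := by rw [← Real.rpow_add hx0]; norm_num

/-- for `p = C log n / n`, with probability `1 - o(n^{-1/5})`
every induced subgraph of `G(n,p)` on `k ≤ n^{1/4}` vertices has at most `2k`
edges. -/
theorem sparse_induced_subgraphs (C : ℝ) (hC : 0 < C) :
    ∃ f : ℕ → ℝ, f =o[atTop] (fun n : ℕ => (n : ℝ) ^ (-(1/5 : ℝ))) ∧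
      ∀ᶠ n : ℕ in atTop, graphMeasure n (C * Real.log n / n)
        {ω | ¬ ∀ S : Finset (Fin n), (S.card : ℝ) ≤ (n : ℝ) ^ ((1 : ℝ)/4) →
          (inducedEdges (graphOf ω) S).card ≤ 2 * S.card}
        ≤ ENNReal.ofReal (f n) := by
  refine ⟨fun n => 2 * (C * Real.log n) ^ 3 * (n : ℝ) ^ (-(3/4) : ℝ), littleo_f C, ?_⟩
  filter_upwards [eventually_small C, eventually_ge_atTop 1] with n hsmall hn
  set p : ℝ := C * Real.log n / n with hp_def
  set L : ℝ := C * Real.log n with hL_def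
  have hlog : (0:ℝ) ≤ Real.log n := Real.log_natCast_nonneg n
  have hL : 0 ≤ L := mul_nonneg hC.le hlog
  have hx0 : (0:ℝ) < (n:ℝ) := by exact_mod_cast Nat.lt_of_lt_of_le Nat.zero_lt_one hn
  have hp : 0 ≤ p := div_nonneg hL hx0.le
  set K : ℕ := ⌊(n : ℝ) ^ ((1:ℝ)/4)⌋₊ with hK_def
  have hsub : {ω : Sym2 (Fin n) → Bool |
        ¬ ∀ S : Finset (Fin n), (S.card : ℝ) ≤ (n : ℝ) ^ ((1 : ℝ)/4) →
          (inducedEdges (graphOf ω) S).card ≤ 2 * S.card}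
      ⊆ {ω | ∃ S : Finset (Fin n), S.card ≤ K ∧
          2 * S.card < (inducedEdges (graphOf ω) S).card} := by
    intro ω hω
    simp only [Set.mem_setOf_eq, not_forall] at hω ⊢
    obtain ⟨S, hS1, hS2⟩ := hω
    exact ⟨S, Nat.le_floor hS1, Nat.lt_of_not_le hS2⟩
  refine (measure_mono hsub).trans ?_
  refine (measure_bad_le n p hp K).trans ?_
  refine ENNReal.ofReal_le_ofReal ?_
  exact sum_le_bound n hn L hL hsmall

end
end

section
/- Let p = (log n + (d−1)log r − (2d+ω(n)))/n with d = o(log n), r = (log n)/d. Then with probability 1 − o(n^{−1/5}), every vertex set S of G(n,p) with n/log n ≤ |S| ≤ n/2 satisfies |∂S| > d|S|. -/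
open MeasureTheory Filter Finset
open scoped ENNReal Classical

noncomputable section

variable {V : Type*}

namespace LSE
variable {n : ℕ}

def cross (S : Finset (Fin n)) : Finset (Sym2 (Fin n)) :=
  (S ×ˢ Sᶜ).image fun x => s(x.1, x.2)

lemma card_cross (S : Finset (Fin n)) : (cross S).card = S.card * Sᶜ.card := by
  rw [cross, Finset.card_image_of_injOn, Finset.card_product]
  rintro ⟨a, b⟩ hab ⟨c, dd⟩ hcd h
  simp only [Finset.mem_coe, Finset.mem_product, Finset.mem_compl] at hab hcd
  simp only [Sym2.eq_iff] at h
  rcases h with ⟨rfl, rfl⟩ | ⟨rfl, rfl⟩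
  · rfl
  · exact absurd hab.1 hcd.2

lemma edgeBoundary_graphOf (ω : Sym2 (Fin n) → Bool) (S : Finset (Fin n)) :
    edgeBoundary (graphOf ω) S = (cross S).filter fun e => ω e = true := by
  ext e
  simp only [edgeBoundary, Finset.mem_filter, SimpleGraph.mem_edgeFinset, cross,
    Finset.mem_image, Finset.mem_product, Finset.mem_compl, Prod.exists]
  constructor
  · rintro ⟨he, u, v, rfl, hu, hv⟩
    rw [SimpleGraph.mem_edgeSet] at he
    exact ⟨⟨u, v, ⟨hu, by simpa using hv⟩, rfl⟩, (show u ≠ v ∧ ω s(u, v) = true from he).2⟩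
  · rintro ⟨⟨u, v, ⟨hu, hv⟩, rfl⟩, hω⟩
    refine ⟨?_, u, v, rfl, hu, hv⟩
    rw [SimpleGraph.mem_edgeSet]
    exact (⟨fun h => hv (h ▸ hu), hω⟩ : u ≠ v ∧ ω s(u, v) = true)

variable {n : ℕ}

def bern (p : ℝ) : Measure Bool :=
  (PMF.bernoulli (min (Real.toNNReal p) 1) (min_le_right _ _)).toMeasure

instance (p : ℝ) : IsProbabilityMeasure (bern p) := PMF.toMeasure.isProbabilityMeasure _

lemma bern_singleton (p : ℝ) (b : Bool) :
    bern p {b} = cond b ((min (Real.toNNReal p) 1 : NNReal) : ℝ≥0∞)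
      (1 - ((min (Real.toNNReal p) 1 : NNReal) : ℝ≥0∞)) := by
  rw [bern, PMF.toMeasure_apply_singleton _ _ (measurableSet_singleton b)]
  rw [PMF.bernoulli_apply]
  cases b <;> simp [ENNReal.coe_sub]

lemma graphMeasure_eq (p : ℝ) : graphMeasure n p = Measure.pi fun _ => bern p := rfl

lemma measure_count_le (p : ℝ) (hp0 : 0 ≤ p) (hp1 : p ≤ 1) (E : Finset (Sym2 (Fin n))) (D : ℕ) :
    graphMeasure n p {ω | ((E.filter fun e => ω e = true)).card ≤ D}
      ≤ ENNReal.ofReal (binomCDF E.card p D) := by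
  set q : ℝ≥0∞ := ENNReal.ofReal p with hq
  have hq1 : q ≤ 1 := by
    rw [hq, ← ENNReal.ofReal_one]
    exact ENNReal.ofReal_le_ofReal hp1
  have hmin : ((min (Real.toNNReal p) 1 : NNReal) : ℝ≥0∞) = q := by
    rw [hq, ENNReal.ofReal, min_eq_left (by simpa using hp1)]
  -- cylinder sets
  set Cyl : Finset (Sym2 (Fin n)) → Set (Sym2 (Fin n) → Bool) :=
    fun T => Set.univ.pi fun e => if e ∈ E then {decide (e ∈ T)} else Set.univ with hCyl
  set idx : Finset (Finset (Sym2 (Fin n))) := E.powerset.filter fun T => T.card ≤ D with hidx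
  have hsub : {ω : Sym2 (Fin n) → Bool | ((E.filter fun e => ω e = true)).card ≤ D}
      ⊆ ⋃ T ∈ idx, Cyl T := by
    intro ω hω
    have h1 : (E.filter fun e => ω e = true) ∈ idx := by
      simp only [hidx, Finset.mem_filter, Finset.mem_powerset]
      exact ⟨Finset.filter_subset _ _, hω⟩
    refine Set.mem_biUnion h1 ?_
    · intro e _
      by_cases he : e ∈ E
      · simp only [he, if_true, Set.mem_singleton_iff]
        cases hωe : ω e <;> simp [he, hωe]
      · simp only [he, if_false]
        exact Set.mem_univ _
  have hCylmeas : ∀ T ∈ idx, graphMeasure n p (Cyl T)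
      = q ^ T.card * (1 - q) ^ (E.card - T.card) := by
    intro T hT
    simp only [hidx, Finset.mem_filter, Finset.mem_powerset] at hT
    obtain ⟨hTE, _⟩ := hT
    rw [graphMeasure_eq, hCyl, Measure.pi_pi]
    have : ∀ e : Sym2 (Fin n), bern p (if e ∈ E then {decide (e ∈ T)} else Set.univ)
        = if e ∈ E then (if e ∈ T then q else 1 - q) else 1 := by
      intro e
      by_cases he : e ∈ E
      · simp only [he, if_true]
        by_cases heT : e ∈ T
        · simp [heT, bern_singleton, hmin]
        · simp [heT, bern_singleton, hmin]
      · simp only [he, if_false]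
        exact measure_univ
    simp only [this]
    rw [Finset.prod_ite_mem Finset.univ E, Finset.univ_inter]
    rw [← Finset.prod_sdiff hTE]
    have h1 : ∀ e ∈ E \ T, (if e ∈ T then q else 1 - q) = 1 - q := by
      intro e he; simp only [Finset.mem_sdiff] at he; simp [he.2]
    have h2 : ∀ e ∈ T, (if e ∈ T then q else 1 - q) = q := by
      intro e he; simp [he]
    rw [Finset.prod_congr rfl h1, Finset.prod_congr rfl h2, Finset.prod_const,
      Finset.prod_const, Finset.card_sdiff_of_subset hTE]
    ring
  calc graphMeasure n p {ω : Sym2 (Fin n) → Bool | ((E.filter fun e => ω e = true)).card ≤ D}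
      ≤ graphMeasure n p (⋃ T ∈ idx, Cyl T) := measure_mono hsub
    _ ≤ ∑ T ∈ idx, graphMeasure n p (Cyl T) := measure_biUnion_finset_le _ _
    _ = ∑ T ∈ idx, ENNReal.ofReal (p ^ T.card * (1 - p) ^ (E.card - T.card)) := by
        refine Finset.sum_congr rfl fun T hT => ?_
        rw [hCylmeas T hT, ENNReal.ofReal_mul (by positivity), ENNReal.ofReal_pow hp0,
          ENNReal.ofReal_pow (by linarith), hq, ENNReal.ofReal_sub _ hp0, ENNReal.ofReal_one]
    _ = ENNReal.ofReal (∑ T ∈ idx, p ^ T.card * (1 - p) ^ (E.card - T.card)) := by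
        rw [ENNReal.ofReal_sum_of_nonneg]
        intro T _
        exact mul_nonneg (pow_nonneg hp0 _) (pow_nonneg (by linarith) _)
    _ ≤ ENNReal.ofReal (binomCDF E.card p D) := by
        apply ENNReal.ofReal_le_ofReal
        rw [binomCDF, ← Finset.sum_fiberwise_of_maps_to (g := Finset.card) (t := Finset.range (D+1))
          (fun T hT => by simp only [hidx, Finset.mem_filter] at hT
                          exact Finset.mem_range.2 (Nat.lt_succ_of_le hT.2))]
        refine Finset.sum_le_sum fun j hj => ?_
        have hsub2 : (idx.filter fun T => T.card = j) ⊆ E.powersetCard j := by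
          intro T hT
          simp only [hidx, Finset.mem_filter, Finset.mem_powerset] at hT
          rw [Finset.mem_powersetCard]
          exact ⟨hT.1.1, hT.2⟩
        calc ∑ T ∈ idx.filter fun T => T.card = j, p ^ T.card * (1 - p) ^ (E.card - T.card)
            = ∑ T ∈ idx.filter fun T => T.card = j, p ^ j * (1 - p) ^ (E.card - j) := by
              refine Finset.sum_congr rfl fun T hT => ?_
              simp only [Finset.mem_filter] at hT
              rw [hT.2]
          _ = (idx.filter fun T => T.card = j).card * (p ^ j * (1 - p) ^ (E.card - j)) := by
              rw [Finset.sum_const, nsmul_eq_mul]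
          _ ≤ (E.card.choose j : ℝ) * (p ^ j * (1 - p) ^ (E.card - j)) := by
              apply mul_le_mul_of_nonneg_right _
                (mul_nonneg (pow_nonneg hp0 _) (pow_nonneg (by linarith) _))
              have := Finset.card_le_card hsub2
              rw [Finset.card_powersetCard] at this
              exact_mod_cast this
          _ = (E.card.choose j : ℝ) * p ^ j * (1 - p) ^ (E.card - j) := by ring


lemma pow_div_factorial_le_exp {x : ℝ} (hx : 0 ≤ x) (k : ℕ) :
    x ^ k / k.factorial ≤ Real.exp x := by
  refine le_trans ?_ (Real.sum_le_exp_of_nonneg hx (k + 1))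
  exact Finset.single_le_sum (f := fun i => x ^ i / i.factorial)
    (fun i _ => by positivity) (Finset.self_mem_range_succ k)

lemma choose_le_pow_div (n k : ℕ) : (n.choose k : ℝ) ≤ (n : ℝ) ^ k / k.factorial := by
  rw [le_div_iff₀ (by positivity)]
  have h : (k.factorial * n.choose k : ℕ) ≤ n ^ k := by
    rw [← Nat.descFactorial_eq_factorial_mul_choose]
    exact Nat.descFactorial_le_pow _ _
  calc (n.choose k : ℝ) * k.factorial = ((k.factorial * n.choose k : ℕ) : ℝ) := by
        push_cast; ring
    _ ≤ ((n ^ k : ℕ) : ℝ) := by exact_mod_cast h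
    _ = (n : ℝ) ^ k := by push_cast; ring

lemma mono_term {μ : ℝ} (hμ0 : 0 ≤ μ) {j D : ℕ} (hjD : j ≤ D) (hD : (D : ℝ) ≤ μ) :
    μ ^ j / j.factorial ≤ μ ^ D / D.factorial := by
  induction D, hjD using Nat.le_induction with
  | base => exact le_refl _
  | succ D hjD ih =>
    have hD' : (D : ℝ) ≤ μ := by push_cast at hD ⊢; linarith
    refine le_trans (ih hD') ?_
    rw [pow_succ, Nat.factorial_succ, div_le_div_iff₀ (by positivity) (by positivity)]
    have h1 : (0 : ℝ) ≤ μ ^ D := pow_nonneg hμ0 _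
    have h2 : (0 : ℝ) < D.factorial := by exact_mod_cast D.factorial_pos
    push_cast at hD ⊢
    nlinarith [mul_nonneg (mul_nonneg h1 h2.le) (by linarith : (0:ℝ) ≤ μ - (↑D + 1))]

lemma binomCDF_nonneg (m : ℕ) {p : ℝ} (hp0 : 0 ≤ p) (hp1 : p ≤ 1) (D : ℕ) :
    0 ≤ binomCDF m p D := by
  refine Finset.sum_nonneg fun j _ => ?_
  have : (0:ℝ) ≤ 1 - p := by linarith
  positivity

lemma binomCDF_le (m D : ℕ) {P : ℝ} (hP0 : 0 ≤ P) (hP1 : P ≤ 1) (hDμ : (D : ℝ) ≤ m * P) :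
    binomCDF m P D ≤ (D + 1 : ℝ) * ((m * P) ^ D / D.factorial) * Real.exp (P * D - m * P) := by
  have h1P : (0:ℝ) ≤ 1 - P := by linarith
  have hμ0 : (0:ℝ) ≤ m * P := by positivity
  have key : ∀ j ∈ Finset.range (D + 1),
      (m.choose j : ℝ) * P ^ j * (1 - P) ^ (m - j)
        ≤ ((m * P) ^ D / D.factorial) * Real.exp (P * D - m * P) := by
    intro j hj
    rw [Finset.mem_range, Nat.lt_succ_iff] at hj
    have step1 : (m.choose j : ℝ) * P ^ j ≤ (m * P) ^ j / j.factorial :=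
      calc (m.choose j : ℝ) * P ^ j
          ≤ ((m : ℝ) ^ j / j.factorial) * P ^ j :=
            mul_le_mul_of_nonneg_right (choose_le_pow_div m j) (pow_nonneg hP0 j)
        _ = (m * P) ^ j / j.factorial := by rw [mul_pow]; ring
    have step2 : ((1 : ℝ) - P) ^ (m - j) ≤ Real.exp (P * j - m * P) := by
      have hcast : (m : ℝ) - (j : ℝ) ≤ ((m - j : ℕ) : ℝ) := by
        rcases le_or_gt j m with h | h
        · rw [Nat.cast_sub h]
        · have : m - j = 0 := Nat.sub_eq_zero_of_le h.le
          rw [this]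
          have : (m:ℝ) ≤ (j:ℝ) := Nat.cast_le.2 h.le
          push_cast
          linarith
      calc ((1 : ℝ) - P) ^ (m - j) ≤ Real.exp (-P) ^ (m - j) := by
            apply pow_le_pow_left₀ h1P
            linarith [Real.add_one_le_exp (-P)]
        _ = Real.exp (-(P * (m - j : ℕ))) := by
            rw [← Real.exp_nat_mul]; ring_nf
        _ ≤ Real.exp (P * j - m * P) := by
            apply Real.exp_le_exp.2
            nlinarith
    have step3 : (m * P) ^ j / j.factorial ≤ (m * P) ^ D / D.factorial :=
      mono_term hμ0 hj hDμ
    calc (m.choose j : ℝ) * P ^ j * (1 - P) ^ (m - j)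
        ≤ ((m * P) ^ j / j.factorial) * Real.exp (P * j - m * P) := by
          apply mul_le_mul step1 step2 (pow_nonneg h1P _) (by positivity)
      _ ≤ ((m * P) ^ D / D.factorial) * Real.exp (P * D - m * P) := by
          apply mul_le_mul step3 (Real.exp_le_exp.2 (by
            have : (j:ℝ) ≤ D := Nat.cast_le.2 hj
            nlinarith)) (Real.exp_nonneg _) (by positivity)
  calc binomCDF m P D ≤ ∑ _j ∈ Finset.range (D + 1),
        ((m * P) ^ D / D.factorial) * Real.exp (P * D - m * P) :=
        Finset.sum_le_sum key
    _ = (D + 1 : ℝ) * ((m * P) ^ D / D.factorial) * Real.exp (P * D - m * P) := by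
        rw [Finset.sum_const, Finset.card_range, nsmul_eq_mul]
        push_cast; ring

set_option maxHeartbeats 4000000 in
lemma per_k (n k δ : ℕ) (L R W P : ℝ)
    (hL : L = Real.log n) (hR : R = Real.log (L / δ))
    (hP : P = (L + ((δ : ℝ) - 1) * R - (2 * δ + W)) / n)
    (hδ1 : 1 ≤ δ) (hδ : (δ : ℝ) ≤ L / 100) (hW0 : 0 ≤ W) (hW : W ≤ Real.log R)
    (hE5 : 1 + 2 * Real.log L ≤ 0.001 * L) (hE6 : 1.5 * L ≤ n)
    (hL1 : 1 ≤ L)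
    (hk1 : (n : ℝ) / L ≤ k) (hk2 : 2 * k ≤ n) :
    (n.choose k : ℝ) * binomCDF (k * (n - k)) P (δ * k) ≤ Real.exp (-(n : ℝ) / 4) := by
  have hLpos : (0:ℝ) < L := by linarith
  have hn0 : (0:ℝ) < n := by linarith
  have hlogL0 : 0 ≤ Real.log L := Real.log_nonneg hL1
  have hlogL : Real.log L ≤ 0.0005 * L := by linarith
  have hδpos : (0:ℝ) < δ := by exact_mod_cast hδ1
  have hδ1' : (1:ℝ) ≤ (δ:ℝ) := by exact_mod_cast hδ1
  have hLδ : (100:ℝ) ≤ L / δ := by rw [le_div_iff₀ hδpos]; linarith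
  have hLδpos : (0:ℝ) < L / δ := by linarith
  have hexp1 : Real.exp 1 < 2.7182818286 := Real.exp_one_lt_d9
  have hexp1' : (2.7182818283:ℝ) < Real.exp 1 := Real.exp_one_gt_d9
  have hR1 : 1 ≤ R := by
    rw [hR, Real.le_log_iff_exp_le hLδpos]
    linarith
  have hRlogL : R ≤ Real.log L := by
    rw [hR]
    apply Real.log_le_log hLδpos
    rw [div_le_iff₀ hδpos]
    nlinarith [mul_nonneg hLpos.le (by linarith : (0:ℝ) ≤ (δ:ℝ) - 1)]
  have hWL : W ≤ Real.log L := by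
    have := Real.log_le_sub_one_of_pos (by linarith : (0:ℝ) < R)
    linarith
  have hδR : (δ:ℝ) * R ≤ 0.38 * L := by
    have h1 : Real.log (L / δ / Real.exp 1) ≤ L / δ / Real.exp 1 - 1 :=
      Real.log_le_sub_one_of_pos (by positivity)
    have h2 : Real.log (L / δ / Real.exp 1) = R - 1 := by
      rw [Real.log_div (ne_of_gt hLδpos) (Real.exp_ne_zero 1), Real.log_exp, hR]
    have h3 : R ≤ L / δ / Real.exp 1 := by linarith
    have h4 : (δ:ℝ) * (L / δ / Real.exp 1) = L / Real.exp 1 := by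
      field_simp
    have h5 : (δ:ℝ) * R ≤ L / Real.exp 1 := by
      rw [← h4]
      exact mul_le_mul_of_nonneg_left h3 hδpos.le
    have h6 : L / Real.exp 1 ≤ L / 2.7 := by
      rw [div_le_div_iff₀ (by positivity) (by norm_num)]
      nlinarith [mul_nonneg hLpos.le (by linarith : (0:ℝ) ≤ Real.exp 1 - 2.7)]
    calc (δ:ℝ) * R ≤ L / 2.7 := le_trans h5 h6
      _ ≤ 0.38 * L := by
        rw [div_le_iff₀ (by norm_num : (0:ℝ) < 2.7)]
        nlinarith
  set Q : ℝ := L + ((δ : ℝ) - 1) * R - (2 * δ + W) with hQ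
  have hδ1R : 0 ≤ ((δ:ℝ) - 1) * R := by
    apply mul_nonneg _ (by linarith)
    have : (1:ℝ) ≤ (δ:ℝ) := by exact_mod_cast hδ1
    linarith
  have hQ_lb : 0.9 * L ≤ Q := by
    rw [hQ]
    linarith
  have hQ_ub : Q ≤ 1.5 * L := by
    rw [hQ]
    have h7 : ((δ:ℝ) - 1) * R ≤ (δ:ℝ) * R := by nlinarith
    linarith
  have hP0 : 0 ≤ P := by
    rw [hP]
    apply div_nonneg _ hn0.le
    linarith
  have hP1 : P ≤ 1 := by
    rw [hP, div_le_one hn0]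
    linarith
  have hnP : (n:ℝ) * P = Q := by
    rw [hP]; field_simp
  have hk0 : 1 ≤ k := by
    by_contra h
    push_neg at h
    interval_cases k
    simp only [Nat.cast_zero] at hk1
    have : (0:ℝ) < (n:ℝ)/L := by positivity
    linarith
  have hkpos : (0:ℝ) < k := by exact_mod_cast hk0
  have hkn : k ≤ n := by omega
  have hkL : (n:ℝ) ≤ (k:ℝ) * L := by
    rw [div_le_iff₀ hLpos] at hk1
    linarith
  have hk2' : 2 * (k:ℝ) ≤ n := by exact_mod_cast hk2
  have hm : ((k * (n - k) : ℕ):ℝ) = (k:ℝ) * ((n:ℝ) - k) := by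
    push_cast [Nat.cast_sub hkn]
    ring
  set μ : ℝ := ((k * (n - k) : ℕ):ℝ) * P with hμdef
  have hμ0 : 0 ≤ μ := mul_nonneg (Nat.cast_nonneg _) hP0
  have hμ_lb : (k:ℝ) / 2 * Q ≤ μ := by
    rw [hμdef, hm]
    have h1 : (n:ℝ)/2 ≤ (n:ℝ) - k := by linarith
    have h2 : (k:ℝ) * ((n:ℝ)/2) * P ≤ (k:ℝ) * ((n:ℝ) - k) * P := by
      apply mul_le_mul_of_nonneg_right _ hP0
      nlinarith
    calc (k:ℝ)/2 * Q = (k:ℝ) * ((n:ℝ)/2) * P := by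
          rw [← hnP]; ring
      _ ≤ _ := h2
  have hμ_ub : μ ≤ 1.5 * (k:ℝ) * L := by
    rw [hμdef, hm]
    have h1 : (k:ℝ) * ((n:ℝ) - k) * P ≤ (k:ℝ) * (n:ℝ) * P := by
      apply mul_le_mul_of_nonneg_right _ hP0
      nlinarith
    calc (k:ℝ) * ((n:ℝ) - k) * P ≤ (k:ℝ) * (n:ℝ) * P := h1
      _ = (k:ℝ) * Q := by rw [← hnP]; ring
      _ ≤ 1.5 * (k:ℝ) * L := by nlinarith
  have hDμ : ((δ * k : ℕ):ℝ) ≤ μ := by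
    push_cast
    have : (δ:ℝ) * k ≤ 0.01 * L * k := by nlinarith
    nlinarith
  have hbound := binomCDF_le (k * (n - k)) (δ * k) hP0 hP1 hDμ
  -- exponential bounds
  have hDcast : ((δ * k : ℕ):ℝ) = (δ:ℝ) * k := by push_cast; ring
  have b1 : ((δ * k : ℕ):ℝ) + 1 ≤ Real.exp ((δ:ℝ) * k) := by
    rw [hDcast]
    exact Real.add_one_le_exp _
  have hx0pos : (0:ℝ) < Real.exp 1 * (L / δ) := by positivity
  have hlogx0 : Real.log (Real.exp 1 * (L / δ)) = 1 + R := by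
    rw [Real.log_mul (Real.exp_ne_zero 1) (ne_of_gt hLδpos), Real.log_exp, hR]
  have hμx : μ ≤ (Real.exp 1 * (L / δ)) * ((δ * k : ℕ):ℝ) := by
    have heq : Real.exp 1 * (L / δ) * ((δ * k : ℕ):ℝ) = Real.exp 1 * L * k := by
      rw [hDcast]; field_simp
    rw [heq]
    have h15 : (1.5:ℝ) ≤ Real.exp 1 := by linarith
    have h16 := mul_le_mul_of_nonneg_right h15 (by positivity : (0:ℝ) ≤ L * k)
    linarith [hμ_ub]
  have hfact : (0:ℝ) < ((δ * k).factorial : ℝ) := by exact_mod_cast (δ*k).factorial_pos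
  have b2 : μ ^ (δ * k) / ((δ * k).factorial : ℝ) ≤ Real.exp (((δ * k : ℕ):ℝ) * (R + 2)) := by
    have h1 : μ ^ (δ * k) ≤ (Real.exp 1 * (L / δ) * ((δ * k : ℕ):ℝ)) ^ (δ * k) :=
      pow_le_pow_left₀ hμ0 hμx _
    have h2 : (Real.exp 1 * (L / δ) * ((δ * k : ℕ):ℝ)) ^ (δ * k)
        = (Real.exp 1 * (L / δ)) ^ (δ * k) * ((δ * k : ℕ):ℝ) ^ (δ * k) := mul_pow _ _ _
    have h3 : ((δ * k : ℕ):ℝ) ^ (δ * k) / ((δ * k).factorial : ℝ) ≤ Real.exp ((δ * k : ℕ):ℝ) :=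
      pow_div_factorial_le_exp (Nat.cast_nonneg _) _
    have h4 : (Real.exp 1 * (L / δ)) ^ (δ * k) = Real.exp (((δ * k : ℕ):ℝ) * (1 + R)) := by
      conv_lhs => rw [← Real.exp_log hx0pos]
      rw [← Real.exp_nat_mul, hlogx0]
    calc μ ^ (δ * k) / ((δ * k).factorial : ℝ)
        ≤ ((Real.exp 1 * (L / δ)) ^ (δ * k) * ((δ * k : ℕ):ℝ) ^ (δ * k)) / ((δ * k).factorial : ℝ) :=
          (div_le_div_iff_of_pos_right hfact).2 (h2 ▸ h1)
      _ = (Real.exp 1 * (L / δ)) ^ (δ * k) * (((δ * k : ℕ):ℝ) ^ (δ * k) / ((δ * k).factorial : ℝ)) := by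
          rw [mul_div_assoc]
      _ ≤ Real.exp (((δ * k : ℕ):ℝ) * (1 + R)) * Real.exp ((δ * k : ℕ):ℝ) := by
          rw [h4]
          exact mul_le_mul_of_nonneg_left h3 (Real.exp_nonneg _)
      _ = Real.exp (((δ * k : ℕ):ℝ) * (R + 2)) := by
          rw [← Real.exp_add]; ring_nf
  have b3 : P * ((δ * k : ℕ):ℝ) - μ ≤ ((δ * k : ℕ):ℝ) - μ := by
    have : P * ((δ * k : ℕ):ℝ) ≤ 1 * ((δ * k : ℕ):ℝ) :=
      mul_le_mul_of_nonneg_right hP1 (Nat.cast_nonneg _)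
    linarith
  have b4 : (n.choose k : ℝ) ≤ Real.exp ((k:ℝ) * (Real.log L + 1)) := by
    have h1 : (n.choose k : ℝ) ≤ (n:ℝ) ^ k / k.factorial := choose_le_pow_div n k
    have h2 : (n:ℝ) ^ k / (k.factorial : ℝ) = ((n:ℝ)/k) ^ k * ((k:ℝ) ^ k / k.factorial) := by
      rw [div_pow]
      field_simp
    have h3 : (n:ℝ)/k ≤ L := by rw [div_le_iff₀ hkpos]; linarith
    have h4 : ((n:ℝ)/k) ^ k ≤ L ^ k := pow_le_pow_left₀ (by positivity) h3 _
    have h5 : (k:ℝ) ^ k / (k.factorial : ℝ) ≤ Real.exp k := pow_div_factorial_le_exp (Nat.cast_nonneg _) _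
    have h6 : L ^ k = Real.exp ((k:ℝ) * Real.log L) := by
      conv_lhs => rw [← Real.exp_log hLpos]
      rw [← Real.exp_nat_mul]
    calc (n.choose k : ℝ) ≤ ((n:ℝ)/k) ^ k * ((k:ℝ) ^ k / k.factorial) := by rw [← h2]; exact h1
      _ ≤ L ^ k * Real.exp k := mul_le_mul h4 h5 (by positivity) (by positivity)
      _ = Real.exp ((k:ℝ) * (Real.log L + 1)) := by
          rw [h6, ← Real.exp_add]; ring_nf
  -- combine
  have hTotal : (k:ℝ) * (Real.log L + 1) + ((δ:ℝ)*k + ((δ:ℝ)*k) * (R + 2) + ((δ:ℝ)*k - μ))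
      ≤ -(n:ℝ) / 4 := by
    have hbr : Real.log L + 1 + (δ:ℝ) * (R + 4) - Q / 2 ≤ -L/4 := by
      rw [hQ]
      linarith [hδR, hRlogL, hWL, hlogL, hE5]
    have hkQ : (k:ℝ)/2 * Q ≤ μ := hμ_lb
    have expand : (k:ℝ) * (Real.log L + 1) + ((δ:ℝ)*k + ((δ:ℝ)*k) * (R + 2) + ((δ:ℝ)*k - μ))
        ≤ (k:ℝ) * (Real.log L + 1 + (δ:ℝ) * (R + 4) - Q / 2) := by
      linarith [hμ_lb]
    have hmid : (k:ℝ) * (Real.log L + 1 + (δ:ℝ) * (R + 4) - Q / 2) ≤ (k:ℝ) * (-L/4) :=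
      mul_le_mul_of_nonneg_left hbr hkpos.le
    have hkL4 : (k:ℝ) * (-L/4) ≤ -(n:ℝ)/4 := by linarith [hkL]
    exact le_trans expand (le_trans hmid hkL4)
  have hbinom_nonneg : 0 ≤ binomCDF (k * (n - k)) P (δ * k) :=
    binomCDF_nonneg _ hP0 hP1 _
  have hq1 : (0:ℝ) ≤ μ ^ (δ * k) / ((δ * k).factorial : ℝ) :=
    div_nonneg (pow_nonneg hμ0 _) hfact.le
  calc (n.choose k : ℝ) * binomCDF (k * (n - k)) P (δ * k)
      ≤ Real.exp ((k:ℝ) * (Real.log L + 1)) *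
        ((((δ * k : ℕ):ℝ) + 1) * (μ ^ (δ * k) / ((δ * k).factorial : ℝ)) *
          Real.exp (P * ((δ * k : ℕ):ℝ) - μ)) := by
        apply mul_le_mul b4 _ hbinom_nonneg (Real.exp_nonneg _)
        rw [hμdef]
        exact hbound
    _ ≤ Real.exp ((k:ℝ) * (Real.log L + 1)) *
        (Real.exp ((δ:ℝ)*k) * Real.exp (((δ * k : ℕ):ℝ) * (R + 2)) *
          Real.exp (((δ * k : ℕ):ℝ) - μ)) := by
        apply mul_le_mul_of_nonneg_left _ (Real.exp_nonneg _)
        apply mul_le_mul (mul_le_mul b1 b2 hq1 (Real.exp_nonneg _))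
          (Real.exp_le_exp.2 b3) (Real.exp_nonneg _)
          (mul_nonneg (Real.exp_nonneg _) (Real.exp_nonneg _))
    _ ≤ Real.exp (-(n:ℝ)/4) := by
        rw [← Real.exp_add, ← Real.exp_add, ← Real.exp_add]
        apply Real.exp_le_exp.2
        rw [hDcast] at *
        linarith [hTotal]

set_option maxHeartbeats 2000000 in
lemma main_bound (n δ : ℕ) (L W P : ℝ)
    (hL : L = Real.log n)
    (hP : P = (L + ((δ : ℝ) - 1) * Real.log (L / δ) - (2 * δ + W)) / n)
    (hδ1 : 1 ≤ δ) (hδ : (δ : ℝ) ≤ L / 100) (hW0 : 0 ≤ W)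
    (hW : W ≤ Real.log (Real.log (L / δ)))
    (hE5 : 1 + 2 * Real.log L ≤ 0.001 * L) (hE6 : 1.5 * L ≤ n)
    (hL1 : 1 ≤ L)
    (hsum : ((n:ℝ) + 1) * Real.exp (-(n:ℝ)/4) ≤ Real.exp (-(n:ℝ)/5)) :
    graphMeasure n P {ω | ¬ ∀ S : Finset (Fin n), (n : ℝ) / Real.log n ≤ (S.card : ℝ) →
          2 * S.card ≤ n →
          (δ : ℝ) * (S.card : ℝ) < ((edgeBoundary (graphOf ω) S).card : ℝ)}
        ≤ ENNReal.ofReal (Real.exp (-(n:ℝ)/5)) := by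
  -- basic facts about P
  have hLpos : (0:ℝ) < L := by linarith
  have hn0 : (0:ℝ) < n := by linarith
  have hδpos : (0:ℝ) < δ := by exact_mod_cast hδ1
  have hδ1' : (1:ℝ) ≤ (δ:ℝ) := by exact_mod_cast hδ1
  have hLδ : (100:ℝ) ≤ L / δ := by
    rw [le_div_iff₀ hδpos]; linarith
  have hLδpos : (0:ℝ) < L / δ := by linarith
  have hexp1 : Real.exp 1 < 2.7182818286 := Real.exp_one_lt_d9
  have hR1 : 1 ≤ Real.log (L / δ) := by
    rw [Real.le_log_iff_exp_le hLδpos]; linarith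
  have hRlogL : Real.log (L / δ) ≤ Real.log L := by
    apply Real.log_le_log hLδpos
    rw [div_le_iff₀ hδpos]
    nlinarith [mul_nonneg hLpos.le (by linarith : (0:ℝ) ≤ (δ:ℝ) - 1)]
  have hWL : W ≤ Real.log L := by
    have := Real.log_le_sub_one_of_pos (by linarith : (0:ℝ) < Real.log (L/δ))
    linarith
  have hδ1R : 0 ≤ ((δ:ℝ) - 1) * Real.log (L / δ) := mul_nonneg (by linarith) (by linarith)
  have hlogL : Real.log L ≤ 0.0005 * L := by linarith
  have hδR : (δ:ℝ) * Real.log (L / δ) ≤ 0.38 * L := by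
    have h1 : Real.log (L / δ / Real.exp 1) ≤ L / δ / Real.exp 1 - 1 :=
      Real.log_le_sub_one_of_pos (by positivity)
    have h2 : Real.log (L / δ / Real.exp 1) = Real.log (L / δ) - 1 := by
      rw [Real.log_div (ne_of_gt hLδpos) (Real.exp_ne_zero 1), Real.log_exp]
    have h3 : Real.log (L / δ) ≤ L / δ / Real.exp 1 := by linarith
    have h4 : (δ:ℝ) * (L / δ / Real.exp 1) = L / Real.exp 1 := by
      field_simp
    have h5 : (δ:ℝ) * Real.log (L / δ) ≤ L / Real.exp 1 := by
      rw [← h4]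
      exact mul_le_mul_of_nonneg_left h3 hδpos.le
    have hexp1' : (2.7182818283:ℝ) < Real.exp 1 := Real.exp_one_gt_d9
    have h6 : L / Real.exp 1 ≤ L / 2.7 := by
      rw [div_le_div_iff₀ (by positivity) (by norm_num)]
      nlinarith [mul_nonneg hLpos.le (by linarith : (0:ℝ) ≤ Real.exp 1 - 2.7)]
    have h7 : L / 2.7 ≤ 0.38 * L := by
      rw [div_le_iff₀ (by norm_num : (0:ℝ) < 2.7)]
      nlinarith
    linarith
  have hP0 : 0 ≤ P := by
    rw [hP]
    apply div_nonneg _ hn0.le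
    linarith
  have hP1 : P ≤ 1 := by
    rw [hP, div_le_one hn0]
    nlinarith
  -- the family of bad sets
  set 𝒮 : Finset (Finset (Fin n)) := Finset.univ.filter
    (fun S : Finset (Fin n) => (n : ℝ) / Real.log n ≤ (S.card : ℝ) ∧ 2 * S.card ≤ n) with h𝒮
  have hsub : {ω : Sym2 (Fin n) → Bool | ¬ ∀ S : Finset (Fin n),
        (n : ℝ) / Real.log n ≤ (S.card : ℝ) → 2 * S.card ≤ n →
        (δ : ℝ) * (S.card : ℝ) < ((edgeBoundary (graphOf ω) S).card : ℝ)}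
      ⊆ ⋃ S ∈ 𝒮, {ω : Sym2 (Fin n) → Bool |
          (((cross S).filter fun e => ω e = true)).card ≤ δ * S.card} := by
    intro ω hω
    simp only [Set.mem_setOf_eq] at hω
    push_neg at hω
    obtain ⟨S, h1, h2, h3⟩ := hω
    have hmem : S ∈ 𝒮 := by
      rw [h𝒮, Finset.mem_filter]
      exact ⟨Finset.mem_univ _, h1, h2⟩
    refine Set.mem_biUnion hmem ?_
    simp only [Set.mem_setOf_eq]
    rw [← edgeBoundary_graphOf]
    exact_mod_cast h3
  have hcard : ∀ S : Finset (Fin n), (cross S).card = S.card * (n - S.card) := by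
    intro S
    rw [card_cross, Finset.card_compl, Fintype.card_fin]
  calc graphMeasure n P {ω | ¬ ∀ S : Finset (Fin n),
          (n : ℝ) / Real.log n ≤ (S.card : ℝ) → 2 * S.card ≤ n →
          (δ : ℝ) * (S.card : ℝ) < ((edgeBoundary (graphOf ω) S).card : ℝ)}
      ≤ graphMeasure n P (⋃ S ∈ 𝒮, {ω : Sym2 (Fin n) → Bool |
          (((cross S).filter fun e => ω e = true)).card ≤ δ * S.card}) := measure_mono hsub
    _ ≤ ∑ S ∈ 𝒮, graphMeasure n P {ω : Sym2 (Fin n) → Bool |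
          (((cross S).filter fun e => ω e = true)).card ≤ δ * S.card} :=
        measure_biUnion_finset_le _ _
    _ ≤ ∑ S ∈ 𝒮, ENNReal.ofReal (binomCDF (S.card * (n - S.card)) P (δ * S.card)) := by
        refine Finset.sum_le_sum fun S _ => ?_
        have := measure_count_le P hP0 hP1 (cross S) (δ * S.card)
        rwa [hcard S] at this
    _ = ENNReal.ofReal (∑ S ∈ 𝒮, binomCDF (S.card * (n - S.card)) P (δ * S.card)) := by
        rw [ENNReal.ofReal_sum_of_nonneg]
        intro S _
        exact binomCDF_nonneg _ hP0 hP1 _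
    _ ≤ ENNReal.ofReal (Real.exp (-(n:ℝ)/5)) := by
        apply ENNReal.ofReal_le_ofReal
        have hfib : ∑ S ∈ 𝒮, binomCDF (S.card * (n - S.card)) P (δ * S.card)
            = ∑ j ∈ Finset.range (n + 1), ∑ S ∈ 𝒮.filter (fun S => S.card = j),
                binomCDF (S.card * (n - S.card)) P (δ * S.card) :=
          (Finset.sum_fiberwise_of_maps_to (fun S _ => Finset.mem_range.2
            (Nat.lt_succ_of_le (le_trans (Finset.card_le_univ S) (by simp)))) _).symm
        rw [hfib]
        have hinner : ∀ j ∈ Finset.range (n + 1),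
            ∑ S ∈ 𝒮.filter (fun S => S.card = j),
              binomCDF (S.card * (n - S.card)) P (δ * S.card) ≤ Real.exp (-(n:ℝ)/4) := by
          intro j _
          rcases Finset.eq_empty_or_nonempty (𝒮.filter (fun S => S.card = j)) with he | hne
          · rw [he, Finset.sum_empty]
            positivity
          · obtain ⟨S₀, hS₀⟩ := hne
            simp only [h𝒮, Finset.mem_filter, Finset.mem_univ, true_and] at hS₀
            obtain ⟨⟨hj1, hj2⟩, hj3⟩ := hS₀
            rw [hj3] at hj1 hj2
            have hstep : ∑ S ∈ 𝒮.filter (fun S => S.card = j),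
                binomCDF (S.card * (n - S.card)) P (δ * S.card)
                = (𝒮.filter (fun S => S.card = j)).card * binomCDF (j * (n - j)) P (δ * j) := by
              rw [Finset.sum_congr rfl (fun S hS => ?_), Finset.sum_const, nsmul_eq_mul]
              simp only [Finset.mem_filter] at hS
              rw [hS.2]
            rw [hstep]
            have hcount : (𝒮.filter (fun S => S.card = j)).card ≤ n.choose j := by
              have hss : 𝒮.filter (fun S => S.card = j) ⊆ Finset.univ.powersetCard j := by
                intro S hS
                simp only [Finset.mem_filter] at hS
                rw [Finset.mem_powersetCard]
                exact ⟨Finset.subset_univ _, hS.2⟩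
              have := Finset.card_le_card hss
              rwa [Finset.card_powersetCard, Finset.card_univ, Fintype.card_fin] at this
            have hperk := per_k n j δ L (Real.log (L / δ)) W P hL rfl hP hδ1 hδ hW0 hW hE5 hE6 hL1
              (by rw [hL]; exact_mod_cast hj1) hj2
            have hbn : 0 ≤ binomCDF (j * (n - j)) P (δ * j) := binomCDF_nonneg _ hP0 hP1 _
            calc ((𝒮.filter (fun S => S.card = j)).card : ℝ) * binomCDF (j * (n - j)) P (δ * j)
                ≤ (n.choose j : ℝ) * binomCDF (j * (n - j)) P (δ * j) :=
                  mul_le_mul_of_nonneg_right (by exact_mod_cast hcount) hbn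
              _ ≤ Real.exp (-(n:ℝ)/4) := hperk
        calc ∑ j ∈ Finset.range (n + 1), ∑ S ∈ 𝒮.filter (fun S => S.card = j),
              binomCDF (S.card * (n - S.card)) P (δ * S.card)
            ≤ ∑ _j ∈ Finset.range (n + 1), Real.exp (-(n:ℝ)/4) := Finset.sum_le_sum hinner
          _ = ((n:ℝ) + 1) * Real.exp (-(n:ℝ)/4) := by
              rw [Finset.sum_const, Finset.card_range, nsmul_eq_mul]
              push_cast; ring
          _ ≤ Real.exp (-(n:ℝ)/5) := hsum

lemma log_small {c : ℝ} (hc : 0 < c) : ∀ᶠ x : ℝ in atTop, Real.log x ≤ c * x := by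
  have h := Real.isLittleO_log_id_atTop.def hc
  filter_upwards [h, eventually_ge_atTop (0:ℝ)] with x h1 h2
  calc Real.log x ≤ ‖Real.log x‖ := le_abs_self _
    _ ≤ c * ‖x‖ := h1
    _ = c * x := by rw [Real.norm_eq_abs, abs_of_nonneg h2]

lemma tendsto_log_nat : Tendsto (fun n : ℕ => Real.log n) atTop atTop :=
  Real.tendsto_log_atTop.comp tendsto_natCast_atTop_atTop

end LSE

/-- with `p = (log n + (d-1)log r - (2d + ω(n)))/n`, with
probability `1 - o(n^{-1/5})` every vertex set `S` of `G(n,p)` with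
`n/log n ≤ |S| ≤ n/2` satisfies `|∂S| > d|S|`. -/
theorem large_sets_expand (d : ℕ → ℕ) (hd1 : ∀ n, 1 ≤ d n)
    (hd : (fun n : ℕ => (d n : ℝ)) =o[atTop] fun n : ℕ => Real.log n)
    (w : ℕ → ℝ) (hw : Tendsto w atTop atTop)
    (hwle : ∀ᶠ n : ℕ in atTop, w n ≤ Real.log (Real.log (Real.log n / (d n : ℝ)))) :
    ∃ f : ℕ → ℝ, f =o[atTop] (fun n : ℕ => (n : ℝ) ^ (-(1/5 : ℝ))) ∧
      ∀ᶠ n : ℕ in atTop, graphMeasure n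
        ((Real.log n + ((d n : ℝ) - 1) * Real.log (Real.log n / (d n : ℝ))
          - (2 * (d n : ℝ) + w n)) / n)
        {ω | ¬ ∀ S : Finset (Fin n), (n : ℝ) / Real.log n ≤ (S.card : ℝ) →
          2 * S.card ≤ n →
          (d n * S.card : ℝ) < ((edgeBoundary (graphOf ω) S).card : ℝ)}
        ≤ ENNReal.ofReal (f n) := by
  refine ⟨fun n => Real.exp (-(n:ℝ)/5), ?_, ?_⟩
  · -- littleO
    rw [Asymptotics.isLittleO_iff_tendsto']
    · have hev : (fun n : ℕ => Real.exp (-(n:ℝ)/5 + Real.log n * (1/5)))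
          =ᶠ[atTop] fun n : ℕ => Real.exp (-(n:ℝ)/5) / (n:ℝ) ^ (-(1/5 : ℝ)) := by
        filter_upwards [eventually_ge_atTop 1] with n hn
        have hn0 : (0:ℝ) < n := by exact_mod_cast hn
        rw [Real.rpow_neg hn0.le, div_inv_eq_mul, Real.rpow_def_of_pos hn0, ← Real.exp_add]
      refine Tendsto.congr' hev ?_
      have hup : Tendsto (fun n : ℕ => Real.exp (-((n:ℝ)/10))) atTop (nhds 0) :=
        Real.tendsto_exp_neg_atTop_nhds_zero.comp
          (tendsto_natCast_atTop_atTop.atTop_div_const (by norm_num))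
      refine squeeze_zero' (Filter.Eventually.of_forall fun n => (Real.exp_pos _).le) ?_ hup
      filter_upwards [tendsto_natCast_atTop_atTop.eventually (LSE.log_small
        (by norm_num : (0:ℝ) < 1/2))] with n hn
      apply Real.exp_le_exp.2
      have : Real.log n ≤ 1/2 * (n:ℝ) := hn
      linarith
    · filter_upwards [eventually_ge_atTop 1] with n hn h0
      exfalso
      have : (0:ℝ) < (n:ℝ) ^ (-(1/5 : ℝ)) :=
        Real.rpow_pos_of_pos (by exact_mod_cast hn) _
      exact absurd h0 (ne_of_gt this)
  · -- the eventual bound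
    have hE5ev : ∀ᶠ n : ℕ in atTop,
        1 + 2 * Real.log (Real.log n) ≤ 0.001 * Real.log n := by
      have hx : ∀ᶠ x : ℝ in atTop, 1 + 2 * Real.log x ≤ 0.001 * x := by
        filter_upwards [LSE.log_small (by norm_num : (0:ℝ) < 0.00025),
          eventually_ge_atTop (4000:ℝ)] with x h1 h2
        linarith
      exact LSE.tendsto_log_nat.eventually hx
    have hE6ev : ∀ᶠ n : ℕ in atTop, 1.5 * Real.log n ≤ (n:ℝ) := by
      have hx : ∀ᶠ x : ℝ in atTop, 1.5 * Real.log x ≤ x := by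
        filter_upwards [LSE.log_small (by norm_num : (0:ℝ) < 1/2),
          eventually_ge_atTop (0:ℝ)] with x h1 h2
        linarith
      exact tendsto_natCast_atTop_atTop.eventually hx
    have hL1ev : ∀ᶠ n : ℕ in atTop, 1 ≤ Real.log n :=
      LSE.tendsto_log_nat.eventually_ge_atTop 1
    have hδev : ∀ᶠ n : ℕ in atTop, (d n : ℝ) ≤ Real.log n / 100 := by
      have h := hd.def (by norm_num : (0:ℝ) < 1/100)
      filter_upwards [h, hL1ev] with n h1 h2
      rw [Real.norm_eq_abs, Real.norm_eq_abs, Nat.abs_cast, abs_of_nonneg (by linarith)] at h1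
      linarith
    have hWev : ∀ᶠ n : ℕ in atTop, 0 ≤ w n := hw.eventually_ge_atTop 0
    have hsumev : ∀ᶠ n : ℕ in atTop,
        ((n:ℝ) + 1) * Real.exp (-(n:ℝ)/4) ≤ Real.exp (-(n:ℝ)/5) := by
      filter_upwards [eventually_ge_atTop (800:ℕ)] with n hn
      have hn' : (800:ℝ) ≤ n := by exact_mod_cast hn
      have hq := Real.quadratic_le_exp_of_nonneg (x := (n:ℝ)/20) (by positivity)
      have h1 : (n:ℝ) + 1 ≤ Real.exp ((n:ℝ)/20) := by nlinarith
      have h2 : ((n:ℝ) + 1) * Real.exp (-(n:ℝ)/4)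
          ≤ Real.exp ((n:ℝ)/20) * Real.exp (-(n:ℝ)/4) :=
        mul_le_mul_of_nonneg_right h1 (Real.exp_nonneg _)
      have h3 : Real.exp ((n:ℝ)/20) * Real.exp (-(n:ℝ)/4) = Real.exp (-(n:ℝ)/5) := by
        rw [← Real.exp_add]
        congr 1
        ring
      linarith [h2, h3.le, h3.ge]
    filter_upwards [hE5ev, hE6ev, hL1ev, hδev, hWev, hwle, hsumev]
      with n hE5 hE6 hL1 hδn hW0 hwlen hsumn
    exact LSE.main_bound n (d n) (Real.log n) (w n) _ rfl rfl (hd1 n) hδn hW0 hwlen hE5 hE6 hL1 hsumn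

end
end
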